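/- arXiv:2102.12562 — 9 statements merged into one kernel-verified Lean document; each statement's English description precedes it below -/
import Mathlib

section
/- Let M be a nonempty compact subset of the Euclidean space ℝ^d and let τ > 0 be such that M has reach at least τ. Let m ∈ M and let v ∈ ℝ^d satisfy ⟨v, w⟩ = 0 for every w in the tangent cone of M at m (i.e. v is a normal vector at m) and ‖v‖ < τ. Then m is the unique nearest point of m + v in M; in particular infDist(m + v, M) = ‖v‖. -/
open Metric Filter Topology Asymptotics
open scoped RealInnerProductSpace

noncomputable section

namespace ReachAux

variable {d : ℕ}

local notation "E" => EuclideanSpace ℝ (Fin d)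

lemma le_infDist_of {A : Set E} (hA : A.Nonempty) {x : E} {r : ℝ}
    (h : ∀ a ∈ A, r ≤ dist x a) : r ≤ Metric.infDist x A := by
  by_contra hlt
  push_neg at hlt
  obtain ⟨y, hy, hyd⟩ := (Metric.infDist_lt_iff hA).1 hlt
  exact absurd (h y hy) (not_le.2 hyd)

lemma exists_nearest {A : Set E} (hAc : IsCompact A) (hA : A.Nonempty) (x : E) :
    ∃ p ∈ A, ‖x - p‖ = Metric.infDist x A := by
  obtain ⟨p, hp, h⟩ := hAc.exists_infDist_eq_dist hA x
  exact ⟨p, hp, by rw [← dist_eq_norm, h]⟩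

/-- Continuity of the (unique) nearest point projection at a point. -/
lemma proj_cont {A : Set E} (hAc : IsCompact A) {x p : E}
    (hp : p ∈ A) (huniq : ∀ q ∈ A, ‖x - q‖ = Metric.infDist x A → q = p)
    {ε : ℝ} (hε : 0 < ε) :
    ∃ ρ > 0, ∀ y q, q ∈ A → ‖y - q‖ = Metric.infDist y A → ‖y - x‖ < ρ → ‖q - p‖ < ε := by
  by_contra hcon
  push_neg at hcon
  choose y q hqA hqn hyx hqp using fun n : ℕ =>
    hcon (1 / ((n : ℝ) + 1)) (by positivity)
  obtain ⟨l, hl, φ, hφ, hql⟩ := hAc.tendsto_subseq hqA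
  have hyx' : Tendsto (fun n => y (φ n)) atTop (𝓝 x) := by
    rw [tendsto_iff_dist_tendsto_zero]
    have hle : ∀ n, dist (y (φ n)) x ≤ 1 / ((n : ℝ) + 1) := by
      intro n
      have h1 : dist (y (φ n)) x < 1 / ((φ n : ℝ) + 1) := by
        rw [dist_eq_norm]; exact hyx (φ n)
      have hn : (n : ℝ) ≤ (φ n : ℝ) := by exact_mod_cast hφ.le_apply
      have h2 : (1 : ℝ) / ((φ n : ℝ) + 1) ≤ 1 / ((n : ℝ) + 1) := by
        apply one_div_le_one_div_of_le (by positivity)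
        linarith
      linarith
    refine squeeze_zero (fun n => dist_nonneg) hle ?_
    exact tendsto_one_div_add_atTop_nhds_zero_nat
  have h1 : Tendsto (fun n => ‖y (φ n) - q (φ n)‖) atTop (𝓝 ‖x - l‖) :=
    (hyx'.sub hql).norm
  have h2 : Tendsto (fun n => ‖y (φ n) - q (φ n)‖) atTop (𝓝 (Metric.infDist x A)) := by
    have := ((continuous_infDist_pt A).tendsto x).comp hyx'
    refine this.congr fun n => ?_
    exact (hqn (φ n)).symm
  have hxl : ‖x - l‖ = Metric.infDist x A := tendsto_nhds_unique h1 h2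
  have hlp : l = p := huniq l hl hxl
  have h0 : Tendsto (fun n => ‖q (φ n) - p‖) atTop (𝓝 ‖l - p‖) :=
    (hql.sub tendsto_const_nhds).norm
  rw [hlp, sub_self, norm_zero] at h0
  obtain ⟨n, hn⟩ := (h0.eventually (eventually_lt_nhds hε)).exists
  exact absurd hn (not_lt.2 (hqp (φ n)))

/-- Differentiability of the squared distance function at a point with a unique
nearest point. -/
lemma hasFDerivAt_infDist_sq {A : Set E} (hAc : IsCompact A) (hA : A.Nonempty) {x p : E}
    (hp : p ∈ A) (hpn : ‖x - p‖ = Metric.infDist x A)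
    (huniq : ∀ q ∈ A, ‖x - q‖ = Metric.infDist x A → q = p) :
    HasFDerivAt (fun z => (Metric.infDist z A) ^ 2)
      ((2 : ℝ) • (innerSL ℝ (x - p))) x := by
  rw [hasFDerivAt_iff_isLittleO_nhds_zero, isLittleO_iff]
  intro c hc
  obtain ⟨ρ, hρ, hcont⟩ := proj_cont hAc hp huniq (show (0:ℝ) < c/4 by linarith)
  have hball : ∀ᶠ h : E in 𝓝 0, ‖h‖ < min ρ c := by
    have : Metric.ball (0 : E) (min ρ c) ∈ 𝓝 (0 : E) :=
      Metric.ball_mem_nhds _ (lt_min hρ hc)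
    filter_upwards [this] with h hh
    simpa [Metric.mem_ball, dist_eq_norm] using hh
  filter_upwards [hball] with h hh
  have hhρ : ‖h‖ < ρ := lt_of_lt_of_le hh (min_le_left _ _)
  have hhc : ‖h‖ ≤ c := le_of_lt (lt_of_lt_of_le hh (min_le_right _ _))
  obtain ⟨q, hq, hqn⟩ := exists_nearest hAc hA (x + h)
  have hqp : ‖q - p‖ < c / 4 := by
    refine hcont (x + h) q hq hqn ?_
    simpa using hhρ
  set r := Metric.infDist x A with hr
  have hrn : (0:ℝ) ≤ r := Metric.infDist_nonneg
  have hub : Metric.infDist (x + h) A ≤ ‖(x - p) + h‖ := by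
    have heq2 : x + h - p = (x - p) + h := by abel
    rw [← heq2]
    simpa [dist_eq_norm] using Metric.infDist_le_dist_of_mem hp
  have hub2 : (Metric.infDist (x + h) A) ^ 2 ≤ ‖x - p‖^2 + 2 * ⟪x - p, h⟫ + ‖h‖^2 := by
    calc (Metric.infDist (x + h) A) ^ 2 ≤ ‖(x - p) + h‖^2 := by
          apply pow_le_pow_left₀ Metric.infDist_nonneg hub
      _ = ‖x - p‖^2 + 2 * ⟪x - p, h⟫ + ‖h‖^2 := norm_add_sq_real _ _
  have hlb : r ^ 2 + 2 * ⟪x - q, h⟫ ≤ (Metric.infDist (x + h) A) ^ 2 := by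
    have heq : x + h - q = (x - q) + h := by abel
    have h1 : (Metric.infDist (x + h) A) ^ 2 = ‖x - q‖^2 + 2 * ⟪x - q, h⟫ + ‖h‖^2 := by
      rw [← hqn, heq]; exact norm_add_sq_real _ _
    have h2 : r ≤ ‖x - q‖ := by
      rw [hr, ← dist_eq_norm]; exact Metric.infDist_le_dist_of_mem hq
    have h3 : r ^ 2 ≤ ‖x - q‖^2 := pow_le_pow_left₀ hrn h2 2
    nlinarith [sq_nonneg ‖h‖]
  have happ : ((2 : ℝ) • (innerSL ℝ (x - p))) h = 2 * ⟪x - p, h⟫ := by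
    simp only [ContinuousLinearMap.smul_apply, innerSL_apply_apply, smul_eq_mul]
  rw [Real.norm_eq_abs, abs_le]
  constructor
  · have hin : ⟪x - q, h⟫ - ⟪x - p, h⟫ = ⟪p - q, h⟫ := by
      rw [← inner_sub_left]
      congr 1
      abel
    have hcs : |⟪p - q, h⟫| ≤ ‖p - q‖ * ‖h‖ := abs_real_inner_le_norm _ _
    have hpq : ‖p - q‖ < c / 4 := by rwa [norm_sub_rev]
    have hkey : -(c/2) * ‖h‖ ≤ ⟪p - q, h⟫ := by
      have h1 : ‖p - q‖ * ‖h‖ ≤ (c/4) * ‖h‖ :=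
        mul_le_mul_of_nonneg_right hpq.le (norm_nonneg _)
      have h2 := neg_abs_le ⟪p - q, h⟫
      nlinarith [norm_nonneg h]
    rw [happ]
    nlinarith [hlb, norm_nonneg h]
  · rw [happ]
    have hh2 : ‖h‖^2 ≤ c * ‖h‖ := by nlinarith [norm_nonneg h]
    have hxp : ‖x - p‖ = r := hpn
    nlinarith [hub2]

/-- Differentiability of the distance function where it is positive,
with unique nearest point. -/
lemma hasFDerivAt_infDist {A : Set E} (hAc : IsCompact A) (hA : A.Nonempty) {x p : E}
    (hp : p ∈ A) (hpn : ‖x - p‖ = Metric.infDist x A)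
    (huniq : ∀ q ∈ A, ‖x - q‖ = Metric.infDist x A → q = p)
    (hr : Metric.infDist x A ≠ 0) :
    HasFDerivAt (fun z => Metric.infDist z A)
      (innerSL ℝ ((Metric.infDist x A)⁻¹ • (x - p))) x := by
  have h2 := hasFDerivAt_infDist_sq hAc hA hp hpn huniq
  set r := Metric.infDist x A with hrdef
  have hrpos : 0 < r := lt_of_le_of_ne Metric.infDist_nonneg (Ne.symm hr)
  have hsq : HasDerivAt Real.sqrt (1 / (2 * Real.sqrt (r ^ 2))) (r ^ 2) :=
    Real.hasDerivAt_sqrt (by positivity)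
  have hcomp := hsq.comp_hasFDerivAt x h2
  have heq : (Real.sqrt ∘ fun z => (Metric.infDist z A) ^ 2) =
      fun z => Metric.infDist z A := by
    funext z
    simp [Function.comp, Real.sqrt_sq Metric.infDist_nonneg]
  rw [heq] at hcomp
  refine hcomp.congr_fderiv ?_
  have hs : Real.sqrt (r ^ 2) = r := Real.sqrt_sq hrpos.le
  ext w
  simp only [innerSL_apply_apply, ContinuousLinearMap.smul_apply, smul_eq_mul,
    real_inner_smul_left, hs]
  field_simp

end ReachAux
/-- `M` has reach at least `τ`: every point at distance less than `τ` from `M`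
has a unique nearest point in `M`. -/
def HasReachAtLeast {d : ℕ} (M : Set (EuclideanSpace ℝ (Fin d))) (τ : ℝ) : Prop :=
  ∀ x : EuclideanSpace ℝ (Fin d), Metric.infDist x M < τ →
    ∃! p, p ∈ M ∧ ‖x - p‖ = Metric.infDist x M

namespace ReachAux

variable {d : ℕ}

lemma uniq_of_reach {M : Set (EuclideanSpace ℝ (Fin d))} {τ : ℝ}
    (hreach : HasReachAtLeast M τ) {x p : EuclideanSpace ℝ (Fin d)}
    (hd : Metric.infDist x M < τ) (hp : p ∈ M) (hpn : ‖x - p‖ = Metric.infDist x M) :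
    ∀ q ∈ M, ‖x - q‖ = Metric.infDist x M → q = p := by
  obtain ⟨w, hw, huw⟩ := hreach x hd
  intro q hq hqn
  rw [huw q ⟨hq, hqn⟩, huw p ⟨hp, hpn⟩]

/-- Key extension lemma (Federer-type): if `p` is a nearest point of `x` at positive
distance `r < τ`, the point on the ray from `p` through `x` at distance `R ∈ (r, τ)`
is at distance exactly `R` from `M`. -/
lemma extension {M : Set (EuclideanSpace ℝ (Fin d))} (hMc : IsCompact M) (hM : M.Nonempty)
    {τ : ℝ} (hreach : HasReachAtLeast M τ) {x p : EuclideanSpace ℝ (Fin d)} {r : ℝ}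
    (hp : p ∈ M) (hrdef : Metric.infDist x M = r) (hpn : ‖x - p‖ = r)
    (hr : 0 < r) {R : ℝ} (hR1 : r < R) (hR2 : R < τ) :
    Metric.infDist (p + (R / r) • (x - p)) M = R := by
  have hrτ : r < τ := lt_trans hR1 hR2
  obtain ⟨σ, hσdef⟩ : ∃ σ, R - r = σ := ⟨_, rfl⟩
  have hσ : 0 < σ := by rw [← hσdef]; linarith
  -- step 1: boundary near-maximizers
  have key : ∀ lam : ℝ, 0 < lam → lam < 1 →
      ∃ z : EuclideanSpace ℝ (Fin d), ‖z - x‖ = σ ∧ r + lam * σ ≤ Metric.infDist z M := by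
    intro lam hlam0 hlam1
    have hFcont : Continuous
        (fun z : EuclideanSpace ℝ (Fin d) =>
          Metric.infDist z M - lam * Metric.infDist z {x}) :=
      (continuous_infDist_pt M).sub (continuous_const.mul (continuous_infDist_pt {x}))
    have hKc : IsCompact (Metric.closedBall x σ) := isCompact_closedBall x σ
    have hKne : (Metric.closedBall x σ).Nonempty := ⟨x, by simp [hσ.le]⟩
    obtain ⟨z0, hz0K, hz0max⟩ := hKc.exists_isMaxOn hKne hFcont.continuousOn
    have hmax : ∀ z ∈ Metric.closedBall x σ,
        Metric.infDist z M - lam * Metric.infDist z {x} ≤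
          Metric.infDist z0 M - lam * Metric.infDist z0 {x} := fun z hz => hz0max hz
    have hxK : x ∈ Metric.closedBall x σ := by simp [hσ.le]
    have hg0 : Metric.infDist z0 {x} = ‖z0 - x‖ := by
      rw [Metric.infDist_singleton, dist_eq_norm]
    have hFz0x : r ≤ Metric.infDist z0 M - lam * ‖z0 - x‖ := by
      have h1 := hmax x hxK
      rw [Metric.infDist_singleton, dist_self, mul_zero, sub_zero, hrdef, hg0] at h1
      exact h1
    have hz0le : ‖z0 - x‖ ≤ σ := by
      have := Metric.mem_closedBall.1 hz0K
      rwa [dist_eq_norm] at this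
    rcases eq_or_lt_of_le hz0le with hbd | hint
    · -- boundary case: done
      refine ⟨z0, hbd, ?_⟩
      rw [hbd] at hFz0x
      linarith
    · -- interior case: impossible
      exfalso
      obtain ⟨δ0, hδ0def⟩ : ∃ δ, Metric.infDist z0 M = δ := ⟨_, rfl⟩
      rw [hδ0def] at hFz0x
      have hδ0r : r ≤ δ0 := by
        have h1 : (0:ℝ) ≤ lam * ‖z0 - x‖ :=
          mul_nonneg hlam0.le (norm_nonneg _)
        linarith
      have hδ0pos : 0 < δ0 := lt_of_lt_of_le hr hδ0r
      have hδ0τ : δ0 < τ := by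
        have h1 : Metric.infDist z0 M ≤ Metric.infDist x M + dist z0 x :=
          Metric.infDist_le_infDist_add_dist
        rw [dist_eq_norm, hδ0def, hrdef] at h1
        have h3 : r + σ = R := by rw [← hσdef]; ring
        nlinarith
      obtain ⟨p0, hp0, hp0n⟩ := exists_nearest hMc hM z0
      rw [hδ0def] at hp0n
      have huniq0 : ∀ q ∈ M, ‖z0 - q‖ = Metric.infDist z0 M → q = p0 :=
        uniq_of_reach hreach (by rw [hδ0def]; exact hδ0τ) hp0 (by rw [hδ0def]; exact hp0n)
      by_cases hz0x : z0 = x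
      · -- z0 = x : slope contradiction
        have huniqx : ∀ q ∈ M, ‖x - q‖ = Metric.infDist x M → q = p :=
          uniq_of_reach hreach (by rw [hrdef]; exact hrτ) hp (by rw [hrdef]; exact hpn)
        have hδx : HasFDerivAt (fun z => Metric.infDist z M)
            (innerSL ℝ ((Metric.infDist x M)⁻¹ • (x - p))) x :=
          hasFDerivAt_infDist hMc hM hp (by rw [hrdef]; exact hpn) huniqx
            (by rw [hrdef]; exact ne_of_gt hr)
        rw [hrdef] at hδx
        set u : EuclideanSpace ℝ (Fin d) := r⁻¹ • (x - p) with hudef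
        have hun : ‖u‖ = 1 := by
          rw [hudef, norm_smul, hpn, Real.norm_eq_abs, abs_of_pos (inv_pos.2 hr)]
          field_simp
        have hcurve : HasDerivAt (fun s : ℝ => x + s • u) u 0 := by
          have h1 : HasDerivAt (fun s : ℝ => s • u) ((1:ℝ) • u) 0 :=
            (hasDerivAt_id (0:ℝ)).smul_const u
          simpa using h1.const_add x
        have hφ1 : HasDerivAt (fun s : ℝ => Metric.infDist (x + s • u) M) 1 0 := by
          have hc0 : x = x + (0:ℝ) • u := by simp
          have hcmp := hδx.comp_hasDerivAt_of_eq 0 hcurve hc0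
          have hval : (innerSL ℝ (r⁻¹ • (x - p))) u = 1 := by
            rw [← hudef]
            have h2 : (innerSL ℝ u) u = ⟪u, u⟫ := rfl
            rw [h2, real_inner_self_eq_norm_sq, hun]
            norm_num
          rw [hval] at hcmp
          exact hcmp
        have hslope : Tendsto (slope (fun s : ℝ => Metric.infDist (x + s • u) M) 0)
            (𝓝[>] 0) (𝓝 1) := by
          have h1 := hasDerivAt_iff_tendsto_slope.1 hφ1
          exact h1.mono_left (nhdsWithin_mono 0 (fun s hs => ne_of_gt hs))
        have ev1 : ∀ᶠ s in 𝓝[>] (0:ℝ),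
            lam < slope (fun s : ℝ => Metric.infDist (x + s • u) M) 0 s :=
          hslope.eventually (eventually_gt_nhds hlam1)
        have ev2 : ∀ᶠ s in 𝓝[>] (0:ℝ), s ∈ Set.Ioc (0:ℝ) σ :=
          Ioc_mem_nhdsGT hσ
        obtain ⟨s, hs1, hs2⟩ := (ev1.and ev2).exists
        obtain ⟨hs0, hsσ⟩ := hs2
        have hnorm_su : ‖x + s • u - x‖ = s := by
          have h1 : x + s • u - x = s • u := by abel
          rw [h1, norm_smul, hun, Real.norm_eq_abs, abs_of_pos hs0, mul_one]
        have hmem : x + s • u ∈ Metric.closedBall x σ := by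
          rw [Metric.mem_closedBall, dist_eq_norm, hnorm_su]
          exact hsσ
        have hgs : Metric.infDist (x + s • u) {x} = s := by
          rw [Metric.infDist_singleton, dist_eq_norm, hnorm_su]
        have hδs : Metric.infDist (x + s • u) M ≤ r + lam * s := by
          have h1 := hmax _ hmem
          rw [hgs, hz0x, Metric.infDist_singleton, dist_self, mul_zero, sub_zero,
            hrdef] at h1
          linarith
        have hslope_le : slope (fun s : ℝ => Metric.infDist (x + s • u) M) 0 s ≤ lam := by
          have h0v : Metric.infDist (x + (0:ℝ) • u) M = r := by
            norm_num [hrdef]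
          rw [slope_def_field]
          simp only [h0v, sub_zero]
          rw [div_le_iff₀ hs0]
          linarith
        linarith
      · -- z0 ≠ x : Fermat contradiction
        have hzx_ne : z0 - x ≠ 0 := sub_ne_zero.2 hz0x
        have hzx_pos : 0 < ‖z0 - x‖ := norm_pos_iff.2 hzx_ne
        have hD1 : HasFDerivAt (fun z => Metric.infDist z M)
            (innerSL ℝ ((Metric.infDist z0 M)⁻¹ • (z0 - p0))) z0 :=
          hasFDerivAt_infDist hMc hM hp0 (by rw [hδ0def]; exact hp0n) huniq0
            (by rw [hδ0def]; exact ne_of_gt hδ0pos)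
        rw [hδ0def] at hD1
        have hD2 : HasFDerivAt (fun z => Metric.infDist z {x})
            (innerSL ℝ ((Metric.infDist z0 {x})⁻¹ • (z0 - x))) z0 := by
          refine hasFDerivAt_infDist isCompact_singleton ⟨x, rfl⟩ rfl hg0.symm ?_ ?_
          · intro q hq _; exact hq
          · rw [hg0]; exact ne_of_gt hzx_pos
        rw [hg0] at hD2
        have hF : HasFDerivAt
            (fun z : EuclideanSpace ℝ (Fin d) =>
              Metric.infDist z M - lam * Metric.infDist z {x})
            ((innerSL ℝ (δ0⁻¹ • (z0 - p0))) -
              lam • (innerSL ℝ ((‖z0 - x‖)⁻¹ • (z0 - x)))) z0 :=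
          hD1.sub (hD2.const_mul lam)
        have hlocal : IsLocalMax
            (fun z : EuclideanSpace ℝ (Fin d) =>
              Metric.infDist z M - lam * Metric.infDist z {x}) z0 :=
          hz0max.isLocalMax (Metric.closedBall_mem_nhds_of_mem
            (by rw [Metric.mem_ball, dist_eq_norm]; exact hint))
        have hzero := hlocal.hasFDerivAt_eq_zero hF
        have happ := ContinuousLinearMap.ext_iff.1 hzero (δ0⁻¹ • (z0 - p0))
        have hu1n : ‖δ0⁻¹ • (z0 - p0)‖ = 1 := by
          rw [norm_smul, hp0n, Real.norm_eq_abs, abs_of_pos (inv_pos.2 hδ0pos)]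
          field_simp
        have hu2n : ‖(‖z0 - x‖)⁻¹ • (z0 - x)‖ = 1 := by
          rw [norm_smul, Real.norm_eq_abs, abs_of_pos (inv_pos.2 hzx_pos)]
          field_simp
        have h11 : ⟪δ0⁻¹ • (z0 - p0), δ0⁻¹ • (z0 - p0)⟫ = 1 := by
          rw [real_inner_self_eq_norm_sq, hu1n]
          norm_num
        have h21 : ⟪(‖z0 - x‖)⁻¹ • (z0 - x), δ0⁻¹ • (z0 - p0)⟫ ≤ 1 := by
          have hle := real_inner_le_norm ((‖z0 - x‖)⁻¹ • (z0 - x)) (δ0⁻¹ • (z0 - p0))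
          rw [hu1n, hu2n] at hle
          linarith
        rw [ContinuousLinearMap.sub_apply, ContinuousLinearMap.smul_apply,
          ContinuousLinearMap.zero_apply] at happ
        simp only [innerSL_apply_apply, smul_eq_mul] at happ
        rw [h11] at happ
        nlinarith [h21]
  -- step 2: pass to the limit lam → 1
  have lamseq : ∀ n : ℕ, ∃ z : EuclideanSpace ℝ (Fin d),
      ‖z - x‖ = σ ∧ r + (1 - 1/((n:ℝ)+2)) * σ ≤ Metric.infDist z M := by
    intro n
    have hn0 : (0:ℝ) ≤ (n:ℝ) := Nat.cast_nonneg n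
    refine key (1 - 1/((n:ℝ)+2)) ?_ ?_
    · have h1 : 1/((n:ℝ)+2) ≤ 1/2 := by
        apply one_div_le_one_div_of_le <;> linarith
      linarith
    · have h1 : 0 < 1/((n:ℝ)+2) := by positivity
      linarith
  choose z hz hzd using lamseq
  have hzsph : ∀ n, z n ∈ Metric.sphere x σ := by
    intro n
    rw [Metric.mem_sphere, dist_eq_norm]
    exact hz n
  obtain ⟨zb, hzbs, φ, hφ, hzb⟩ := (isCompact_sphere x σ).tendsto_subseq hzsph
  have hzbx : ‖zb - x‖ = σ := by
    rw [← dist_eq_norm]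
    exact Metric.mem_sphere.1 hzbs
  have hδzb : r + σ ≤ Metric.infDist zb M := by
    have hA : Tendsto (fun n => Metric.infDist (z (φ n)) M) atTop
        (𝓝 (Metric.infDist zb M)) := ((continuous_infDist_pt M).tendsto zb).comp hzb
    have hB : Tendsto (fun n => r + (1 - 1/((φ n : ℝ)+2)) * σ) atTop (𝓝 (r + σ)) := by
      have h1 : Tendsto (fun n => 1/((φ n : ℝ)+2)) atTop (𝓝 0) := by
        have hle : ∀ n, 1/((φ n : ℝ)+2) ≤ 1/((n:ℝ)+1) := by
          intro n
          apply one_div_le_one_div_of_le (by positivity)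
          have : (n:ℝ) ≤ (φ n : ℝ) := by exact_mod_cast hφ.le_apply
          linarith
        have hpos : ∀ n, (0:ℝ) ≤ 1/((φ n : ℝ)+2) := by intro n; positivity
        exact squeeze_zero hpos hle tendsto_one_div_add_atTop_nhds_zero_nat
      have h2 : Tendsto (fun n => (1 - 1/((φ n : ℝ)+2)) * σ) atTop (𝓝 ((1 - 0) * σ)) :=
        ((tendsto_const_nhds.sub h1).mul tendsto_const_nhds)
      rw [sub_zero, one_mul] at h2
      exact tendsto_const_nhds.add h2
    exact le_of_tendsto_of_tendsto' hB hA (fun n => hzd (φ n))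
  have hδzb2 : Metric.infDist zb M ≤ r + σ := by
    have h1 : Metric.infDist zb M ≤ Metric.infDist x M + dist zb x :=
      Metric.infDist_le_infDist_add_dist
    rw [dist_eq_norm, hzbx, hrdef] at h1
    exact h1
  have hδzbeq : Metric.infDist zb M = r + σ := le_antisymm hδzb2 hδzb
  -- triangle equality
  have hzbp_ge : r + σ ≤ ‖zb - p‖ := by
    rw [← hδzbeq, ← dist_eq_norm]
    exact Metric.infDist_le_dist_of_mem hp
  have hzbp_le : ‖zb - p‖ ≤ σ + r := by
    calc ‖zb - p‖ = ‖(zb - x) + (x - p)‖ := by rw [sub_add_sub_cancel]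
      _ ≤ ‖zb - x‖ + ‖x - p‖ := norm_add_le _ _
      _ = σ + r := by rw [hzbx, hpn]
  have hsr : SameRay ℝ (zb - x) (x - p) := by
    rw [sameRay_iff_norm_add, sub_add_sub_cancel, hzbx, hpn]
    linarith
  have hzbx_ne : zb - x ≠ 0 := by
    intro h
    rw [h, norm_zero] at hzbx
    linarith
  have hxp_ne : x - p ≠ 0 := by
    intro h
    rw [h, norm_zero] at hpn
    linarith
  obtain ⟨a, b, ha, hb, hab⟩ := hsr.exists_pos hzbx_ne hxp_ne
  have hnorms : a * σ = b * r := by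
    have h1 : ‖a • (zb - x)‖ = ‖b • (x - p)‖ := by rw [hab]
    rw [norm_smul, norm_smul, hzbx, hpn, Real.norm_eq_abs, Real.norm_eq_abs,
      abs_of_pos ha, abs_of_pos hb] at h1
    exact h1
  have hzbeq : zb - x = (σ / r) • (x - p) := by
    have h1 : zb - x = (a⁻¹ * b) • (x - p) := by
      rw [mul_smul, ← hab, smul_smul, inv_mul_cancel₀ (ne_of_gt ha), one_smul]
    rw [h1]
    congr 1
    field_simp
    linarith [hnorms]
  have hfinal : p + (R / r) • (x - p) = zb := by
    have h1 : zb = x + (σ / r) • (x - p) := by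
      rw [← hzbeq]; abel
    rw [h1]
    have h2 : R / r = 1 + σ / r := by
      rw [← hσdef]
      field_simp
      ring
    rw [h2, add_smul, one_smul]
    abel
  rw [hfinal, hδzbeq, ← hσdef]
  ring

end ReachAux
set_option maxHeartbeats 1000000

open ReachAux in
theorem normal_vector_unique_nearest_point {d : ℕ}
    (M : Set (EuclideanSpace ℝ (Fin d))) (hM : M.Nonempty) (hMc : IsCompact M)
    (τ : ℝ) (hτ : 0 < τ) (hreach : HasReachAtLeast M τ)
    (m : EuclideanSpace ℝ (Fin d)) (hm : m ∈ M)
    (v : EuclideanSpace ℝ (Fin d))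
    (hv : ∀ w ∈ tangentConeAt ℝ M m, (inner ℝ v w : ℝ) = 0)
    (hvτ : ‖v‖ < τ) :
    Metric.infDist (m + v) M = ‖v‖ ∧
      (∀ p ∈ M, ‖m + v - p‖ = Metric.infDist (m + v) M → p = m) := by
  classical
  by_cases hv0 : v = 0
  · subst hv0
    constructor
    · rw [add_zero, norm_zero]
      exact Metric.infDist_zero_of_mem hm
    · intro p hp hpn
      rw [add_zero, Metric.infDist_zero_of_mem hm] at hpn
      have h1 : m - p = 0 := norm_eq_zero.1 hpn
      exact (sub_eq_zero.1 h1).symm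
  · -- main case
    have hV : 0 < ‖v‖ := norm_pos_iff.2 hv0
    obtain ⟨V, hVdef⟩ : ∃ V, ‖v‖ = V := ⟨_, rfl⟩
    rw [hVdef] at hV hvτ
    obtain ⟨vh, hvhdef⟩ : ∃ u : EuclideanSpace ℝ (Fin d), V⁻¹ • v = u := ⟨_, rfl⟩
    have hvhn : ‖vh‖ = 1 := by
      rw [← hvhdef, norm_smul, Real.norm_eq_abs, abs_of_pos (inv_pos.2 hV), hVdef]
      field_simp
    have hVvh : V • vh = v := by
      rw [← hvhdef, smul_smul, mul_inv_cancel₀ (ne_of_gt hV), one_smul]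
    have hdist : ∀ s : ℝ, 0 ≤ s → ‖(m + s • vh) - m‖ = s := by
      intro s hs
      have h1 : m + s • vh - m = s • vh := by abel
      rw [h1, norm_smul, hvhn, mul_one, Real.norm_eq_abs, abs_of_nonneg hs]
    have hble : ∀ s : ℝ, 0 ≤ s → Metric.infDist (m + s • vh) M ≤ s := by
      intro s hs
      have h1 := Metric.infDist_le_dist_of_mem (x := m + s • vh) hm
      rw [dist_eq_norm, hdist s hs] at h1
      exact h1
    -- the fundamental inequality (Federer) at scale s with nearest point c
    have hIp : ∀ s c, 0 < s → s < V → c ∈ M →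
        ‖(m + s • vh) - c‖ = Metric.infDist (m + s • vh) M →
        ‖c - m‖^2 * (1 - s/(2*V)) ≤ s * ⟪vh, c - m⟫ := by
      intro s c hs hsV hc hcn
      obtain ⟨h, hhdef⟩ : ∃ h, Metric.infDist (m + s • vh) M = h := ⟨_, rfl⟩
      rw [hhdef] at hcn
      have hh_le : h ≤ s := by rw [← hhdef]; exact hble s hs.le
      have hh0 : 0 ≤ h := by rw [← hhdef]; exact Metric.infDist_nonneg
      obtain ⟨w, hwdef⟩ : ∃ w, c - m = w := ⟨_, rfl⟩
      have hxc : (m + s • vh) - c = s • vh - w := by rw [← hwdef]; abel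
      have hwn : ‖w‖ = ‖c - m‖ := by rw [hwdef]
      rcases eq_or_lt_of_le hh0 with hz | hpos
      · -- h = 0 : c = m + s • vh
        have h0 : (m + s • vh) - c = 0 := by
          rw [← norm_eq_zero, hcn, ← hz]
        have hw_eq : w = s • vh := by
          rw [← hwdef]
          have := sub_eq_zero.1 h0
          rw [← this]; abel
        have hiw : ⟪vh, c - m⟫ = s := by
          rw [hwdef, hw_eq, real_inner_smul_right, real_inner_self_eq_norm_sq, hvhn]
          norm_num
        have hnw : ‖c - m‖ = s := by
          rw [← hwn, hw_eq, norm_smul, hvhn, mul_one, Real.norm_eq_abs, abs_of_pos hs]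
        rw [hiw, hnw]
        have hθ : 0 ≤ s/(2*V) := by positivity
        nlinarith [sq_nonneg s]
      · -- h > 0 : use the extension lemma
        have hhV : h < V := lt_of_le_of_lt hh_le hsV
        have hO := extension hMc hM hreach hc hhdef hcn hpos hhV hvτ
        have hOm : V ≤ ‖(c + (V/h) • ((m + s • vh) - c)) - m‖ := by
          have h1 := Metric.infDist_le_dist_of_mem
            (x := c + (V/h) • ((m + s • vh) - c)) hm
          rw [hO, dist_eq_norm] at h1
          exact h1
        have hOexp : (c + (V/h) • ((m + s • vh) - c)) - m = w + (V/h) • (s • vh - w) := by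
          rw [hxc, ← hwdef]; abel
        have hkh : (V/h) * h = V := by field_simp
        have hnxc : ‖s • vh - w‖ = h := by rw [← hxc]; exact hcn
        have hsq : ‖w + (V/h) • (s • vh - w)‖^2 =
            ‖w‖^2 + 2 * ((V/h) * ⟪w, s • vh - w⟫) + (V/h)^2 * h^2 := by
          rw [norm_add_sq_real, real_inner_smul_right, norm_smul, Real.norm_eq_abs,
            abs_of_pos (div_pos hV hpos), hnxc, mul_pow]
        have hinner : ⟪w, s • vh - w⟫ = s * ⟪w, vh⟫ - ‖w‖^2 := by
          rw [inner_sub_right, real_inner_smul_right, real_inner_self_eq_norm_sq]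
        have hV2 : V^2 ≤ ‖w‖^2 + 2 * ((V/h) * (s * ⟪w, vh⟫ - ‖w‖^2)) + (V/h)^2 * h^2 := by
          rw [← hinner, ← hsq]
          calc V^2 ≤ ‖(c + (V/h) • ((m + s • vh) - c)) - m‖^2 :=
              pow_le_pow_left₀ hV.le hOm 2
            _ = ‖w + (V/h) • (s • vh - w)‖^2 := by rw [hOexp]
        have hkh2 : (V/h)^2 * h^2 = V^2 := by
          rw [← mul_pow, hkh]
        have hstep : 0 ≤ ‖w‖^2 + 2 * ((V/h) * (s * ⟪w, vh⟫ - ‖w‖^2)) := by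
          rw [hkh2] at hV2; linarith
        have hstep2 : 0 ≤ ‖w‖^2 * h + 2 * (V * (s * ⟪w, vh⟫ - ‖w‖^2)) := by
          have h1 := mul_nonneg hstep hh0
          have h2 : (‖w‖^2 + 2 * ((V/h) * (s * ⟪w, vh⟫ - ‖w‖^2))) * h =
              ‖w‖^2 * h + 2 * (((V/h) * h) * (s * ⟪w, vh⟫ - ‖w‖^2)) := by ring
          rw [h2, hkh] at h1
          exact h1
        -- conclude
        have hcomm : ⟪vh, c - m⟫ = ⟪w, vh⟫ := by rw [hwdef, real_inner_comm]
        rw [hcomm, ← hwn]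
        have h2V : (0:ℝ) < 2 * V := by linarith
        rw [← mul_le_mul_iff_left₀ h2V]
        have hr1 : ‖w‖^2 * (1 - s/(2*V)) * (2*V) = 2*V*‖w‖^2 - ‖w‖^2 * s := by
          field_simp
        rw [hr1]
        nlinarith [hstep2, sq_nonneg ‖w‖, hh_le]
    -- Claim A: arbitrarily small s with tangentially small nearest points
    have huniqm : ∀ q ∈ M, ‖m - q‖ = Metric.infDist m M → q = m := by
      intro q hq hqn
      rw [Metric.infDist_zero_of_mem hm] at hqn
      exact (sub_eq_zero.1 (norm_eq_zero.1 hqn)).symm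
    have hmn0 : ‖m - m‖ = Metric.infDist m M := by
      rw [sub_self, norm_zero, Metric.infDist_zero_of_mem hm]
    have claimA : ∀ ε : ℝ, 0 < ε → ∃ s c, 0 < s ∧ s < V/2 ∧ c ∈ M ∧
        ‖(m + s • vh) - c‖ = Metric.infDist (m + s • vh) M ∧ ‖c - m‖ ≤ ε * s := by
      intro ε hε
      by_contra hcon
      push_neg at hcon
      -- sequence of scales
      obtain ⟨c, hcM, hcn⟩ : ∃ c : ℕ → EuclideanSpace ℝ (Fin d), (∀ n : ℕ, c n ∈ M) ∧
          ∀ n : ℕ, ‖(m + (V/(2*((n:ℝ)+2))) • vh) - c n‖ =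
            Metric.infDist (m + (V/(2*((n:ℝ)+2))) • vh) M := by
        choose c hc1 hc2 using fun n : ℕ =>
          exists_nearest hMc hM (m + (V/(2*((n:ℝ)+2))) • vh)
        exact ⟨c, hc1, hc2⟩
      have hspos : ∀ n : ℕ, (0:ℝ) < V/(2*((n:ℝ)+2)) := by
        intro n; positivity
      have hsV2 : ∀ n : ℕ, V/(2*((n:ℝ)+2)) < V/2 := by
        intro n
        apply div_lt_div_of_pos_left hV (by norm_num)
        have : (0:ℝ) ≤ (n:ℝ) := Nat.cast_nonneg n
        linarith
      have hsV : ∀ n : ℕ, V/(2*((n:ℝ)+2)) < V := by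
        intro n
        have := hsV2 n
        linarith
      have hηn : ∀ n : ℕ, ε * (V/(2*((n:ℝ)+2))) < ‖c n - m‖ := by
        intro n
        exact hcon (V/(2*((n:ℝ)+2))) (c n) (hspos n) (hsV2 n) (hcM n) (hcn n)
      have hηpos : ∀ n : ℕ, 0 < ‖c n - m‖ := by
        intro n
        exact lt_of_le_of_lt (by positivity : (0:ℝ) ≤ ε * (V/(2*((n:ℝ)+2)))) (hηn n)
      -- nearest points tend to m
      have hη0 : Tendsto (fun n => ‖c n - m‖) atTop (𝓝 0) := by
        rw [Metric.tendsto_atTop]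
        intro e he
        obtain ⟨ρ, hρ, hcont⟩ := proj_cont hMc hm huniqm he
        obtain ⟨N, hN⟩ := exists_nat_gt (V/(2*ρ))
        refine ⟨N, fun n hn => ?_⟩
        have hsn : V/(2*((n:ℝ)+2)) < ρ := by
          have hNn : (N:ℝ) ≤ (n:ℝ) := Nat.cast_le.2 hn
          rw [div_lt_iff₀ (by positivity)]
          rw [div_lt_iff₀ (by positivity : (0:ℝ) < 2*ρ)] at hN
          nlinarith [hρ]
        have h1 := hcont (m + (V/(2*((n:ℝ)+2))) • vh) (c n) (hcM n) (hcn n)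
          (by rw [hdist _ (hspos n).le]; exact hsn)
        rw [Real.dist_0_eq_abs, abs_of_nonneg (norm_nonneg _)]
        exact h1
      -- unit directions, compactness
      have hmemsph : ∀ n : ℕ, (‖c n - m‖)⁻¹ • (c n - m) ∈ Metric.sphere (0 : EuclideanSpace ℝ (Fin d)) 1 := by
        intro n
        rw [mem_sphere_zero_iff_norm, norm_smul, Real.norm_eq_abs,
          abs_of_pos (inv_pos.2 (hηpos n))]
        exact inv_mul_cancel₀ (ne_of_gt (hηpos n))
      obtain ⟨wb, hwbs, φ, hφ, hwb⟩ :=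
        (isCompact_sphere (0 : EuclideanSpace ℝ (Fin d)) 1).tendsto_subseq hmemsph
      -- tangent cone membership
      have htang : wb ∈ tangentConeAt ℝ M m := by
        refine mem_tangentConeAt_of_seq atTop (fun n => (‖c (φ n) - m‖)⁻¹)
          (fun n => c (φ n) - m) ?_ (Eventually.of_forall fun n => ?_) hwb
        · exact tendsto_zero_iff_norm_tendsto_zero.2 (hη0.comp hφ.tendsto_atTop)
        · have h1 : m + (c (φ n) - m) = c (φ n) := by abel
          rw [h1]; exact hcM (φ n)
      -- lower bound on the inner products
      have hlow : ∀ n : ℕ, ε/2 ≤ ⟪vh, (‖c n - m‖)⁻¹ • (c n - m)⟫ := by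
        intro n
        have hIpn := hIp (V/(2*((n:ℝ)+2))) (c n) (hspos n) (hsV n) (hcM n) (hcn n)
        have hθ : (V/(2*((n:ℝ)+2)))/(2*V) ≤ 1/2 := by
          rw [div_le_iff₀ (by positivity : (0:ℝ) < 2*V)]
          have h1 := hsV n
          linarith
        have hsiw : ‖c n - m‖^2 * (1/2) ≤ (V/(2*((n:ℝ)+2))) * ⟪vh, c n - m⟫ := by
          have h1 : ‖c n - m‖^2 * (1/2) ≤
              ‖c n - m‖^2 * (1 - (V/(2*((n:ℝ)+2)))/(2*V)) := by
            apply mul_le_mul_of_nonneg_left _ (sq_nonneg _)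
            linarith
          linarith [hIpn]
        have hiw2 : ε * ‖c n - m‖ / 2 ≤ ⟪vh, c n - m⟫ := by
          have hs := hspos n
          have hη := hηn n
          have hηp := hηpos n
          nlinarith [hsiw]
        rw [real_inner_smul_right]
        have hηp := hηpos n
        rw [← mul_le_mul_iff_right₀ hηp]
        have h2 : ‖c n - m‖ * ((‖c n - m‖)⁻¹ * ⟪vh, c n - m⟫) = ⟪vh, c n - m⟫ := by
          field_simp
        rw [h2]
        nlinarith [hiw2]
      -- pass to the limit
      have hlim : Tendsto (fun n => ⟪vh, (‖c (φ n) - m‖)⁻¹ • (c (φ n) - m)⟫) atTop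
          (𝓝 ⟪vh, wb⟫) := by
        have hctn : Continuous (fun y : EuclideanSpace ℝ (Fin d) => ⟪vh, y⟫) :=
          continuous_const.inner continuous_id
        exact (hctn.tendsto wb).comp hwb
      have hge2 : ε/2 ≤ ⟪vh, wb⟫ :=
        ge_of_tendsto hlim (Eventually.of_forall fun n => hlow (φ n))
      have hzero : ⟪vh, wb⟫ = 0 := by
        rw [← hvhdef, real_inner_smul_left, hv wb htang, mul_zero]
      rw [hzero] at hge2
      linarith
    -- Step B: lower bound on infDist (m+v) M
    have hgeB : ∀ ε : ℝ, 0 < ε → ε ≤ 1/4 → V - 6*ε*V ≤ Metric.infDist (m + v) M := by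
      intro ε hε hε4
      obtain ⟨s, c, hs, hsV2, hcM, hcn, hηε⟩ := claimA ε hε
      obtain ⟨h, hhdef⟩ : ∃ h, Metric.infDist (m + s • vh) M = h := ⟨_, rfl⟩
      rw [hhdef] at hcn
      have hhs : h ≤ s := by rw [← hhdef]; exact hble s hs.le
      have hh0 : 0 ≤ h := by rw [← hhdef]; exact Metric.infDist_nonneg
      obtain ⟨w, hwdef⟩ : ∃ w, c - m = w := ⟨_, rfl⟩
      have hwn : ‖w‖ ≤ ε * s := by rw [← hwdef]; exact hηε
      have hxc : (m + s • vh) - c = s • vh - w := by rw [← hwdef]; abel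
      have hhn : ‖s • vh - w‖ = h := by rw [← hxc]; exact hcn
      have hsvn : ‖s • vh‖ = s := by
        rw [norm_smul, hvhn, mul_one, Real.norm_eq_abs, abs_of_pos hs]
      have hsq : h^2 = s^2 - 2*(s*⟪vh, w⟫) + ‖w‖^2 := by
        rw [← hhn, norm_sub_sq_real, hsvn, real_inner_smul_left]
      have hcs : ⟪vh, w⟫ ≤ ‖w‖ := by
        have h1 := real_inner_le_norm vh w
        rw [hvhn, one_mul] at h1
        exact h1
      have hw0 : 0 ≤ ‖w‖ := norm_nonneg _
      have hsh : s - h ≤ 2*‖w‖ := by nlinarith [hsq, hcs, hh0, hhs, sq_nonneg ‖w‖, hs]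
      have hεs0 : ε*s ≤ (1/4)*s := mul_le_mul_of_nonneg_right hε4 hs.le
      have hh_lb : s*(1-2*ε) ≤ h := by nlinarith [hwn, hsh]
      have hhpos : 0 < h := by nlinarith [hh_lb, hεs0, hs]
      have hhV : h < V := by
        apply lt_of_le_of_lt hhs
        linarith
      have hO := extension hMc hM hreach hcM hhdef hcn hhpos hhV hvτ
      obtain ⟨O, hOdef⟩ : ∃ O, c + (V/h) • ((m + s • vh) - c) = O := ⟨_, rfl⟩
      rw [hOdef] at hO
      obtain ⟨t, htdef⟩ : ∃ t, ‖(m + v) - O‖ = t := ⟨_, rfl⟩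
      -- lower bound for infDist (m+v) M
      have hglb : V - t ≤ Metric.infDist (m + v) M := by
        apply le_infDist_of hM
        intro a ha
        have h1 : V ≤ dist O a := by
          have h0 := Metric.infDist_le_dist_of_mem (x := O) ha
          rw [hO] at h0
          exact h0
        have h2 := dist_triangle O (m + v) a
        have h3 : dist O (m + v) = t := by
          rw [dist_comm, dist_eq_norm, htdef]
        linarith
      -- compute the norm bound
      have hOexp : (m + v) - O = (V - V*s/h) • vh + (V/h - 1) • w := by
        rw [← hOdef, hxc, ← hVvh, ← hwdef]
        module
      have hnb : t ≤ V*(s-h)/h + (V/h - 1)*‖w‖ := by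
        rw [← htdef, hOexp]
        calc ‖(V - V*s/h) • vh + (V/h - 1) • w‖ ≤
            ‖(V - V*s/h) • vh‖ + ‖(V/h - 1) • w‖ := norm_add_le _ _
          _ = |V - V*s/h| + |V/h - 1| * ‖w‖ := by
              rw [norm_smul, norm_smul, hvhn, mul_one, Real.norm_eq_abs, Real.norm_eq_abs]
          _ = V*(s-h)/h + (V/h - 1)*‖w‖ := by
              have e1 : |V - V*s/h| = V*(s-h)/h := by
                rw [abs_of_nonpos]
                · field_simp; ring
                · have : V*h ≤ V*s := mul_le_mul_of_nonneg_left hhs hV.le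
                  rw [sub_nonpos, le_div_iff₀ hhpos]
                  nlinarith
              have e2 : |V/h - 1| = V/h - 1 := by
                rw [abs_of_nonneg]
                rw [sub_nonneg, le_div_iff₀ hhpos, one_mul]
                exact hhV.le
              rw [e1, e2]
      have hεs : ε*s ≤ (1/4)*s := mul_le_mul_of_nonneg_right hε4 hs.le
      have h1 : s - h ≤ 2*ε*s := by linarith only [hsh, hwn]
      have h2 : s ≤ 2*h := by linarith only [h1, hεs]
      have hb1 : V*(s-h)/h ≤ 4*ε*V := by
        rw [div_le_iff₀ hhpos]
        have hA : V*(s-h) ≤ V*(2*ε*s) := mul_le_mul_of_nonneg_left h1 hV.le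
        have hB : (2*ε*V)*s ≤ (2*ε*V)*(2*h) :=
          mul_le_mul_of_nonneg_left h2 (by positivity)
        linarith only [hA, hB]
      have hb2 : (V/h - 1)*‖w‖ ≤ 2*ε*V := by
        have h3 : ‖w‖ ≤ 2*ε*h := by
          have hC : ε*s ≤ ε*(2*h) := mul_le_mul_of_nonneg_left h2 hε.le
          linarith only [hwn, hC]
        have h5 : 0 ≤ V/h - 1 := by
          rw [sub_nonneg, le_div_iff₀ hhpos, one_mul]; exact hhV.le
        calc (V/h - 1)*‖w‖ ≤ (V/h)*‖w‖ :=
            mul_le_mul_of_nonneg_right (by linarith only [h5]) hw0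
          _ ≤ (V/h)*(2*ε*h) := by
              apply mul_le_mul_of_nonneg_left h3
              positivity
          _ = 2*ε*V := by field_simp
      have hfin : t ≤ 6*ε*V := by
        calc t ≤ V*(s-h)/h + (V/h - 1)*‖w‖ := hnb
          _ ≤ 4*ε*V + 2*ε*V := add_le_add hb1 hb2
          _ = 6*ε*V := by ring
      linarith [hglb, hfin]
    -- conclude the equality
    have hge : V ≤ Metric.infDist (m + v) M := by
      by_contra hlt
      push_neg at hlt
      have hd : 0 < V - Metric.infDist (m + v) M := by linarith
      have hεpos : 0 < min (1/4 : ℝ) ((V - Metric.infDist (m + v) M)/(12*V)) := by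
        apply lt_min (by norm_num)
        positivity
      have h6 : 6 * min (1/4 : ℝ) ((V - Metric.infDist (m + v) M)/(12*V)) * V ≤
          (V - Metric.infDist (m + v) M)/2 := by
        have h1 : min (1/4 : ℝ) ((V - Metric.infDist (m + v) M)/(12*V)) ≤
            (V - Metric.infDist (m + v) M)/(12*V) := min_le_right _ _
        have h2 : 6 * ((V - Metric.infDist (m + v) M)/(12*V)) * V =
            (V - Metric.infDist (m + v) M)/2 := by
          field_simp; ring
        nlinarith [hV]
      have := hgeB _ hεpos (min_le_left _ _)
      linarith
    have hle : Metric.infDist (m + v) M ≤ V := by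
      have h1 := Metric.infDist_le_dist_of_mem (x := m + v) hm
      rw [dist_eq_norm] at h1
      have h2 : m + v - m = v := by abel
      rw [h2, hVdef] at h1
      exact h1
    have heq : Metric.infDist (m + v) M = ‖v‖ := by
      rw [hVdef]; exact le_antisymm hle hge
    refine ⟨heq, ?_⟩
    intro p hp hpn
    have hmn : ‖m + v - m‖ = Metric.infDist (m + v) M := by
      rw [heq]
      have h2 : m + v - m = v := by abel
      rw [h2]
    exact uniq_of_reach hreach (by rw [heq, hVdef]; exact hvτ) hm hmn p hp hpn
end
end

section
/- Let E and F be real normed spaces, Ω ⊆ E open, x ∈ Ω, and let f, g : E → F be differentiable at x. Let M ⊆ F, let τ > ε > 0 with ‖f(x) − g(x)‖ ≤ ε, and let P : F → F be a map, differentiable at f(x) and at g(x), such that P∘f = f on a neighborhood of x, such that ‖DP(g(x)) − DP(f(x))‖ ≤ (2/τ + 1/(τ − ε))·‖f(x) − g(x)‖, and such that ‖DP(f(x))‖ ≤ 1. Then the composition P∘g is differentiable at x and ‖D(P∘g)(x) − Df(x)‖ ≤ ‖Dg(x) − Df(x)‖ + C·‖f(x) − g(x)‖, where C = (2/τ + 1/(τ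 − ε))·(‖Dg(x) − Df(x)‖ + ‖Df(x)‖). -/
theorem derivative_error_of_projected_approximation
    {E F : Type*} [NormedAddCommGroup E] [NormedSpace ℝ E]
    [NormedAddCommGroup F] [NormedSpace ℝ F]
    (Ω : Set E) (hΩ : IsOpen Ω) (x : E) (hx : x ∈ Ω)
    (f g : E → F)
    (hf : DifferentiableAt ℝ f x) (hg : DifferentiableAt ℝ g x)
    (M : Set F) (τ ε : ℝ) (hε : 0 < ε) (hετ : ε < τ)
    (hfg : ‖f x - g x‖ ≤ ε)
    (P : F → F)
    (hPf : DifferentiableAt ℝ P (f x)) (hPg : DifferentiableAt ℝ P (g x))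
    (hPfix : ∀ᶠ y in nhds x, P (f y) = f y)
    (hPlip : ‖fderiv ℝ P (g x) - fderiv ℝ P (f x)‖ ≤
      (2 / τ + 1 / (τ - ε)) * ‖f x - g x‖)
    (hPnorm : ‖fderiv ℝ P (f x)‖ ≤ 1) :
    DifferentiableAt ℝ (P ∘ g) x ∧
      ‖fderiv ℝ (P ∘ g) x - fderiv ℝ f x‖ ≤
        ‖fderiv ℝ g x - fderiv ℝ f x‖ +
          ((2 / τ + 1 / (τ - ε)) * (‖fderiv ℝ g x - fderiv ℝ f x‖ + ‖fderiv ℝ f x‖)) *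
            ‖f x - g x‖ := by
  have hdiff : DifferentiableAt ℝ (P ∘ g) x := hPg.comp x hg
  refine ⟨hdiff, ?_⟩
  set A := fderiv ℝ P (g x)
  set B := fderiv ℝ P (f x)
  set G := fderiv ℝ g x
  set Fd := fderiv ℝ f x
  have h1 : fderiv ℝ (P ∘ g) x = A.comp G := fderiv_comp x hPg hg
  have h2 : Fd = B.comp Fd := by
    have heq : (fun y => P (f y)) =ᶠ[nhds x] f := hPfix
    have h3 := heq.fderiv_eq (𝕜 := ℝ)
    have h4 : fderiv ℝ (P ∘ f) x = B.comp Fd := fderiv_comp x hPf hf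
    rw [show Fd = fderiv ℝ f x from rfl] at h4 ⊢
    rw [← h4]
    exact h3.symm
  have key : A.comp G - Fd = (A - B).comp G + B.comp (G - Fd) := by
    rw [ContinuousLinearMap.sub_comp, ContinuousLinearMap.comp_sub, ← h2]
    abel
  rw [h1, key]
  have hG : ‖G‖ ≤ ‖G - Fd‖ + ‖Fd‖ := by
    calc ‖G‖ = ‖G - Fd + Fd‖ := by rw [sub_add_cancel]
    _ ≤ ‖G - Fd‖ + ‖Fd‖ := norm_add_le _ _
  calc ‖(A - B).comp G + B.comp (G - Fd)‖
      ≤ ‖(A - B).comp G‖ + ‖B.comp (G - Fd)‖ := norm_add_le _ _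
    _ ≤ ‖A - B‖ * ‖G‖ + ‖B‖ * ‖G - Fd‖ := by
        gcongr <;> exact ContinuousLinearMap.opNorm_comp_le _ _
    _ ≤ ((2 / τ + 1 / (τ - ε)) * ‖f x - g x‖) * (‖G - Fd‖ + ‖Fd‖) + 1 * ‖G - Fd‖ := by
        gcongr
        exact (norm_nonneg _).trans (le_trans (le_refl _) (le_trans hPlip (le_refl _)))
    _ = ‖G - Fd‖ + ((2 / τ + 1 / (τ - ε)) * (‖G - Fd‖ + ‖Fd‖)) * ‖f x - g x‖ := by ring
end

section
/- Let M be a nonempty compact subset of the Euclidean space ℝ^d, let τ > 0 be such that M has reach at least τ, and let P : ℝ^d → ℝ^d be a map such that for every x with infDist(x, M) < τ, P(x) ∈ M and ‖x − P(x)‖ = infDist(x, M). Let m ∈ M, assume the tangent cone of M at m is (the carrier of) a linear subspace T of ℝ^d, and assume P is differentiable at m. Then the Fréchet derivative of P at m equals the orthogonal projection of ℝ^d onto T. -/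
open Filter Asymptotics

theorem fderiv_projection_on_manifold {d : ℕ}
    (M : Set (EuclideanSpace ℝ (Fin d))) (hM : M.Nonempty) (hMc : IsCompact M)
    (τ : ℝ) (hτ : 0 < τ) (hreach : HasReachAtLeast M τ)
    (P : EuclideanSpace ℝ (Fin d) → EuclideanSpace ℝ (Fin d))
    (hP : ∀ x : EuclideanSpace ℝ (Fin d), Metric.infDist x M < τ →
      P x ∈ M ∧ ‖x - P x‖ = Metric.infDist x M)
    (m : EuclideanSpace ℝ (Fin d)) (hm : m ∈ M)
    (T : Submodule ℝ (EuclideanSpace ℝ (Fin d)))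
    (hT : tangentConeAt ℝ M m = (T : Set (EuclideanSpace ℝ (Fin d))))
    (hdiff : DifferentiableAt ℝ P m) :
    fderiv ℝ P m = T.subtypeL.comp (Submodule.orthogonalProjectionOnto T) := by
  classical
  set D := fderiv ℝ P m with hDdef
  let E := EuclideanSpace ℝ (Fin d)
  have hD : HasFDerivAt P D m := hdiff.hasFDerivAt
  -- P fixes points of M
  have hfix : ∀ x ∈ M, P x = x := by
    intro x hx
    have h0 : Metric.infDist x M = 0 := Metric.infDist_zero_of_mem hx
    have h1 := hP x (by rw [h0]; exact hτ)
    have h2 : ‖x - P x‖ = 0 := by rw [h1.2, h0]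
    have h3 : x - P x = 0 := norm_eq_zero.mp h2
    have := sub_eq_zero.mp h3
    exact this.symm
  have hPm : P m = m := hfix m hm
  -- infDist bound near m
  have hdistle : ∀ x : E, Metric.infDist x M ≤ ‖x - m‖ := fun x => by
    exact (Metric.infDist_le_dist_of_mem (x := x) hm).trans_eq (dist_eq_norm x m)
  -- the slope along direction v tends to D v
  have hslope : ∀ v : E, Tendsto (fun n : ℕ => ((n : ℝ) + 1) • (P (m + ((n : ℝ) + 1)⁻¹ • v) - m))
      atTop (nhds (D v)) := by
    intro v
    have h1 : HasDerivAt (fun t : ℝ => m + t • v) v 0 := by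
      simpa using ((hasDerivAt_id (0 : ℝ)).smul_const v).const_add m
    have hcomp : HasDerivAt (fun t : ℝ => P (m + t • v)) (D v) 0 := by
      have h2 : HasFDerivAt P D ((fun t : ℝ => m + t • v) 0) := by simpa using hD
      exact h2.comp_hasDerivAt 0 h1
    have h3 := hasDerivAt_iff_tendsto_slope.mp hcomp
    have htn : Tendsto (fun n : ℕ => ((n : ℝ) + 1)⁻¹) atTop (nhdsWithin 0 {(0:ℝ)}ᶜ) := by
      apply tendsto_nhdsWithin_of_tendsto_nhds_of_eventually_within
      · simpa only [one_div] using tendsto_one_div_add_atTop_nhds_zero_nat (𝕜 := ℝ)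
      · filter_upwards with n
        have : (0:ℝ) < ((n : ℝ) + 1)⁻¹ := by positivity
        simp [this.ne']
    have h4 := h3.comp htn
    refine h4.congr fun n => ?_
    simp [slope_def_module, Function.comp, hPm]
  -- D maps into T
  have hrange : ∀ v : E, D v ∈ T := by
    intro v
    have hmem : D v ∈ tangentConeAt ℝ M m := by
      refine mem_tangentConeAt_of_seq atTop (fun n : ℕ => (n : ℝ) + 1) (fun n : ℕ => P (m + ((n : ℝ) + 1)⁻¹ • v) - m)
        (tangentConeAt.lim_zero atTop ?_ (hslope v)) ?_ (hslope v)
      swap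
      · have htv : Tendsto (fun n : ℕ => ((n : ℝ) + 1)⁻¹ * ‖v‖) atTop (nhds 0) := by
          have := tendsto_one_div_add_atTop_nhds_zero_nat.mul_const ‖v‖
          simpa [one_div] using this
        filter_upwards [htv.eventually (gt_mem_nhds hτ)] with n hn
        have hle : Metric.infDist (m + ((n : ℝ) + 1)⁻¹ • v) M ≤ ((n : ℝ) + 1)⁻¹ * ‖v‖ := by
          have h := hdistle (m + ((n : ℝ) + 1)⁻¹ • v)
          have hab : |(n : ℝ) + 1| = (n : ℝ) + 1 := abs_of_pos (by positivity)
          simpa [norm_smul, abs_inv, hab] using h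
        have hlt : Metric.infDist (m + ((n : ℝ) + 1)⁻¹ • v) M < τ := lt_of_le_of_lt hle hn
        have := (hP _ hlt).1
        simpa using this
      · have : Tendsto (fun n : ℕ => (n : ℝ) + 1) atTop atTop :=
          tendsto_atTop_add_const_right _ 1 tendsto_natCast_atTop_atTop
        refine this.congr fun n => ?_
        rw [Real.norm_eq_abs, abs_of_pos (by positivity)]
    rwa [hT] at hmem
  -- D fixes T
  have hfixT : ∀ v : E, v ∈ T → D v = v := by
    intro v hv
    have hv' : v ∈ tangentConeAt ℝ M m := by rw [hT]; exact hv
    obtain ⟨c, d', hd0', hdM, hcd⟩ := mem_tangentConeAt_iff_exists_seq.mp hv'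
    have hd0 : Tendsto d' atTop (nhds 0) := hd0'
    have hx : Tendsto (fun n => m + d' n) atTop (nhds m) := by
      simpa using tendsto_const_nhds.add hd0
    have hlo := (hD.isLittleO.comp_tendsto hx)
    have hlo2 : (fun n => d' n - D (d' n)) =o[atTop] d' := by
      refine (hlo.congr' ?_ ?_)
      · filter_upwards [hdM] with n hn
        simp [Function.comp, hfix _ hn, hPm]
      · filter_upwards with n
        simp [Function.comp]
    have hlo3 : (fun n => c n • (d' n - D (d' n))) =o[atTop] fun n => c n • d' n :=
      (isBigO_refl c atTop).smul_isLittleO hlo2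
    have hbig : (fun n => c n • d' n) =O[atTop] fun _ => (1 : ℝ) := hcd.isBigO_one ℝ
    have hto0 : Tendsto (fun n => c n • (d' n - D (d' n))) atTop (nhds 0) :=
      (isLittleO_one_iff ℝ).mp (hlo3.trans_isBigO hbig)
    have hto : Tendsto (fun n => c n • (d' n - D (d' n))) atTop (nhds (v - D v)) := by
      have h1 : Tendsto (fun n => c n • d' n - D (c n • d' n)) atTop (nhds (v - D v)) :=
        hcd.sub ((D.continuous.tendsto v).comp hcd)
      refine h1.congr fun n => ?_
      rw [smul_sub, map_smul]
    have := tendsto_nhds_unique hto hto0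
    have := sub_eq_zero.mp this
    exact this.symm
  -- contraction estimate
  have hcontr : ∀ w : E, ‖w - D w‖ ≤ ‖w‖ := by
    intro w
    have h1 : Tendsto (fun n : ℕ => w - ((n : ℝ) + 1) • (P (m + ((n : ℝ) + 1)⁻¹ • w) - m))
        atTop (nhds (w - D w)) := tendsto_const_nhds.sub (hslope w)
    refine le_of_tendsto h1.norm ?_
    have htv : Tendsto (fun n : ℕ => ((n : ℝ) + 1)⁻¹ * ‖w‖) atTop (nhds 0) := by
      have := tendsto_one_div_add_atTop_nhds_zero_nat.mul_const ‖w‖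
      simpa [one_div] using this
    filter_upwards [htv.eventually (gt_mem_nhds hτ)] with n hn
    set t : ℝ := ((n : ℝ) + 1)⁻¹ with ht
    have htpos : (0:ℝ) < t := by positivity
    set x : E := m + t • w with hx
    have hle : Metric.infDist x M ≤ t * ‖w‖ := by
      have h := hdistle x
      have hab : |(n : ℝ) + 1| = (n : ℝ) + 1 := abs_of_pos (by positivity)
      simpa [hx, ht, norm_smul, abs_inv, hab] using h
    have hlt : Metric.infDist x M < τ := lt_of_le_of_lt hle hn
    have hxP : ‖x - P x‖ = Metric.infDist x M := (hP x hlt).2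
    have key : w - ((n : ℝ) + 1) • (P x - m) = ((n : ℝ) + 1) • (x - P x) := by
      have hinv : ((n : ℝ) + 1) • (t • w) = w := by
        rw [smul_smul]
        have : ((n : ℝ) + 1) * t = 1 := by
          rw [ht]; field_simp
        rw [this, one_smul]
      calc w - ((n : ℝ) + 1) • (P x - m)
          = ((n : ℝ) + 1) • (t • w) - ((n : ℝ) + 1) • (P x - m) := by rw [hinv]
        _ = ((n : ℝ) + 1) • (t • w - (P x - m)) := (smul_sub ((n : ℝ) + 1) (t • w) (P x - m)).symm
        _ = ((n : ℝ) + 1) • (x - P x) := by rw [hx]; congr 1; abel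
    rw [key]
    have hnpos : (0:ℝ) < (n : ℝ) + 1 := by positivity
    rw [norm_smul, Real.norm_eq_abs, abs_of_pos hnpos, hxP]
    calc ((n : ℝ) + 1) * Metric.infDist x M ≤ ((n : ℝ) + 1) * (t * ‖w‖) := by
          exact mul_le_mul_of_nonneg_left hle hnpos.le
      _ = ‖w‖ := by rw [← mul_assoc, ht]; field_simp
  -- D vanishes on the orthogonal complement
  have hperp : ∀ b : E, b ∈ Tᗮ → D b = 0 := by
    intro b hb
    have h1 : D b ∈ T := hrange b
    have h2 : ‖b - D b‖ ≤ ‖b‖ := hcontr b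
    have h3 : inner ℝ (D b) b = (0:ℝ) := hb (D b) h1
    have h4 : inner ℝ b (D b) = (0:ℝ) := by rwa [real_inner_comm] at h3
    have h5 : ‖b - D b‖ ^ 2 = ‖b‖ ^ 2 - 2 * inner ℝ b (D b) + ‖D b‖ ^ 2 := norm_sub_sq_real b (D b)
    rw [h4] at h5
    have h6 : ‖b - D b‖ ^ 2 ≤ ‖b‖ ^ 2 := by
      have := norm_nonneg (b - D b)
      nlinarith
    have h7 : ‖D b‖ ^ 2 ≤ 0 := by nlinarith
    have h8 : ‖D b‖ = 0 := by nlinarith [norm_nonneg (D b), sq_nonneg ‖D b‖]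
    exact norm_eq_zero.mp h8
  -- conclude
  refine ContinuousLinearMap.ext fun v => ?_
  have hv1 : (T.orthogonalProjectionOnto v : E) ∈ T := (T.orthogonalProjectionOnto v).2
  have hv2 : v - (T.orthogonalProjectionOnto v : E) ∈ Tᗮ := by exact Submodule.sub_starProjection_mem_orthogonal (K := T) v
  have : D v = D (T.orthogonalProjectionOnto v : E) + D (v - (T.orthogonalProjectionOnto v : E)) := by
    rw [← map_add]
    congr 1
    abel
  rw [ContinuousLinearMap.comp_apply]
  show D v = _
  rw [this, hfixT _ hv1, hperp _ hv2, add_zero]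
  rfl
end

section
/- Let T and R be real n×n matrices, where T is an orthogonal projection matrix (T is symmetric and T² = T) and R is orthogonal (RᵀR = I). Then the commutator satisfies ‖T·R − R·T‖₂ ≤ ‖I − R‖₂, where ‖·‖₂ denotes the spectral norm (the operator norm induced by the Euclidean norm on ℝⁿ). -/
open Matrix

/-- The spectral norm of a real `n × n` matrix: the operator norm of the induced
linear map on the Euclidean space `ℝⁿ`. -/
noncomputable def specNorm {n : ℕ} (A : Matrix (Fin n) (Fin n) ℝ) : ℝ :=
  ‖Matrix.toEuclideanCLM (𝕜 := ℝ) A‖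

section Aux

variable {E : Type*} [NormedAddCommGroup E] [InnerProductSpace ℝ E] [CompleteSpace E]

local notation "⟪" x ", " y "⟫" => inner (𝕜 := ℝ) x y

/-- A self-adjoint idempotent is a contraction. -/
lemma proj_contraction (P : E →L[ℝ] E) (hP : IsSelfAdjoint P) (hP2 : P * P = P)
    (y : E) : ‖P y‖ ≤ ‖y‖ := by
  have hsym := hP.isSymmetric
  have h1 : ‖P y‖ ^ 2 = ⟪y, P y⟫ := by
    have : ⟪P y, P y⟫ = ⟪y, P (P y)⟫ := hsym y (P y)
    have hPP : P (P y) = P y := by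
      have := congrArg (fun f : E →L[ℝ] E => f y) hP2
      simpa [ContinuousLinearMap.mul_apply] using this
    rw [hPP] at this
    rw [← real_inner_self_eq_norm_sq, this]
  have h2 : ⟪y, P y⟫ ≤ ‖y‖ * ‖P y‖ := real_inner_le_norm y (P y)
  rcases eq_or_lt_of_le (norm_nonneg (P y)) with h | h
  · rw [← h]; exact norm_nonneg y
  · nlinarith [norm_nonneg y]

lemma key_clm (P Q : E →L[ℝ] E) (hP : IsSelfAdjoint P) (hP2 : P * P = P) :
    ‖P * Q - Q * P‖ ≤ ‖1 - Q‖ := by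
  have hsym := hP.isSymmetric
  have hP' : IsSelfAdjoint (1 - P) := by
    show star (1 - P) = 1 - P
    rw [star_sub, star_one, hP.star_eq]
  have hP2' : (1 - P) * (1 - P) = 1 - P := by
    simp only [sub_mul, mul_sub, one_mul, mul_one, hP2]; abel
  have hid : P * Q - Q * P = P * (Q - 1) * (1 - P) - (1 - P) * (Q - 1) * P := by
    simp only [mul_sub, sub_mul, mul_one, one_mul, hP2]
    abel
  set k := ‖1 - Q‖ with hk
  have hkQ : ‖Q - 1‖ = k := by rw [hk, norm_sub_rev]
  have hknn : 0 ≤ k := norm_nonneg _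
  refine ContinuousLinearMap.opNorm_le_bound _ hknn ?_
  intro x
  set u := (1 - P) x with hu
  set v := P x with hv
  set a := P ((Q - 1) u) with ha
  set b := (1 - P) ((Q - 1) v) with hb
  have hCx : (P * Q - Q * P) x = a - b := by
    rw [hid]
    simp [ha, hb, hu, hv, ContinuousLinearMap.mul_apply]
  -- orthogonality of a and b
  have horth : ⟪a, b⟫ = 0 := by
    have h1 : ⟪a, b⟫ = ⟪(Q - 1) u, P ((1 - P) ((Q - 1) v))⟫ := hsym _ _
    have h2 : P ((1 - P) ((Q - 1) v)) = 0 := by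
      have h3 : P * (1 - P) = 0 := by
        simp only [mul_sub, mul_one, hP2]; abel
      have := congrArg (fun f : E →L[ℝ] E => f ((Q - 1) v)) h3
      simpa [ContinuousLinearMap.mul_apply] using this
    rw [h1, h2, inner_zero_right]
  -- Pythagoras for x = v + u
  have hxuv : x = v + u := by simp [hu, hv]
  have horth2 : ⟪v, u⟫ = 0 := by
    have h1 : ⟪v, u⟫ = ⟪x, P ((1 - P) x)⟫ := hsym _ _
    have h3 : P * (1 - P) = 0 := by
      simp only [mul_sub, mul_one, hP2]; abel
    have h2 : P ((1 - P) x) = 0 := by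
      have := congrArg (fun f : E →L[ℝ] E => f x) h3
      simpa [ContinuousLinearMap.mul_apply] using this
    rw [h1, h2, inner_zero_right]
  have hpyth : ‖v‖ ^ 2 + ‖u‖ ^ 2 = ‖x‖ ^ 2 := by
    have := norm_add_sq_real v u
    rw [← hxuv, horth2] at this
    linarith
  -- norm bounds
  have hua : ‖a‖ ≤ k * ‖u‖ := by
    calc ‖a‖ ≤ ‖(Q - 1) u‖ := proj_contraction P hP hP2 _
      _ ≤ ‖Q - 1‖ * ‖u‖ := ContinuousLinearMap.le_opNorm _ _
      _ = k * ‖u‖ := by rw [hkQ]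
  have hvb : ‖b‖ ≤ k * ‖v‖ := by
    calc ‖b‖ ≤ ‖(Q - 1) v‖ := proj_contraction (1 - P) hP' hP2' _
      _ ≤ ‖Q - 1‖ * ‖v‖ := ContinuousLinearMap.le_opNorm _ _
      _ = k * ‖v‖ := by rw [hkQ]
  have hsq : ‖a - b‖ ^ 2 = ‖a‖ ^ 2 + ‖b‖ ^ 2 := by
    have := norm_sub_sq_real a b
    rw [horth] at this
    linarith
  have hfin : ‖a - b‖ ^ 2 ≤ (k * ‖x‖) ^ 2 := by
    have h1 : ‖a‖ ^ 2 ≤ (k * ‖u‖) ^ 2 := by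
      have := norm_nonneg a; nlinarith
    have h2 : ‖b‖ ^ 2 ≤ (k * ‖v‖) ^ 2 := by
      have := norm_nonneg b; nlinarith
    rw [hsq]
    calc ‖a‖ ^ 2 + ‖b‖ ^ 2 ≤ (k * ‖u‖) ^ 2 + (k * ‖v‖) ^ 2 := add_le_add h1 h2
      _ = k ^ 2 * (‖v‖ ^ 2 + ‖u‖ ^ 2) := by ring
      _ = k ^ 2 * ‖x‖ ^ 2 := by rw [hpyth]
      _ = (k * ‖x‖) ^ 2 := by ring
  rw [hCx]
  have hnn : 0 ≤ k * ‖x‖ := mul_nonneg hknn (norm_nonneg x)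
  nlinarith [norm_nonneg (a - b)]

end Aux

theorem commutator_projection_rotation_bound {n : ℕ}
    (T R : Matrix (Fin n) (Fin n) ℝ)
    (hTsymm : Tᵀ = T) (hTproj : T * T = T)
    (hR : Rᵀ * R = 1) :
    specNorm (T * R - R * T) ≤ specNorm (1 - R) := by
  unfold specNorm
  set Φ := Matrix.toEuclideanCLM (𝕜 := ℝ) (n := Fin n) with hΦ
  have hTH : Tᴴ = T := by
    ext i j
    simp only [Matrix.conjTranspose_apply, star_trivial]
    exact congrFun (congrFun hTsymm i) j
  have hPsa : IsSelfAdjoint (Φ T) := by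
    show star (Φ T) = Φ T
    rw [← map_star Φ T]
    exact congrArg Φ hTH
  have hP2 : Φ T * Φ T = Φ T := by rw [← _root_.map_mul, hTproj]
  have h1 : Φ (T * R - R * T) = Φ T * Φ R - Φ R * Φ T := by
    rw [map_sub, _root_.map_mul, _root_.map_mul]
  have h2 : Φ (1 - R) = 1 - Φ R := by rw [map_sub, _root_.map_one]
  rw [h1, h2]
  exact key_clm (Φ T) (Φ R) hPsa hP2
end

section
/- Let r ≥ 2 be a natural number, n ≥ 1, and let f : ℝ → ℝ^d be a 1-periodic function of class C^r. Let S_n f(t) = Σ_{k=−n}^{n} c_k(f)·e^{2πikt} be the n-th Fourier partial sum of f, where c_k(f) = ∫₀¹ f(x)·e^{−2πikx} dx ∈ ℂ^d (computed componentwise). Then for every x ∈ ℝ, ‖f(x) − S_n f(x)‖₂ ≤ (√(2d)/(2π)^r)·n^{1/2 − r}·‖f^{(r)}‖, where ‖f^{(r)}‖ = (∫₀¹ ‖f^{(r)}(x)‖₂² dx)^{1/2}. -/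
open Real MeasureTheory

lemma aux_periodic_deriv {F : Type*} [NormedAddCommGroup F] [NormedSpace ℝ F]
    {f : ℝ → F} {c : ℝ} (h : Function.Periodic f c) : Function.Periodic (deriv f) c := by
  intro x
  have : (fun y : ℝ => f (y + c)) = f := funext h
  rw [← deriv_comp_add_const f c x, this]

lemma aux_periodic_iteratedDeriv {F : Type*} [NormedAddCommGroup F] [NormedSpace ℝ F]
    {f : ℝ → F} {c : ℝ} (h : Function.Periodic f c) (m : ℕ) :
    Function.Periodic (iteratedDeriv m f) c := by
  induction m with
  | zero => simpa using h
  | succ m ih => rw [iteratedDeriv_succ]; exact aux_periodic_deriv ih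

lemma aux_clm_iteratedDeriv {F G : Type*} [NormedAddCommGroup F] [NormedSpace ℝ F]
    [NormedAddCommGroup G] [NormedSpace ℝ G]
    (g : F →L[ℝ] G) {f : ℝ → F} {m : ℕ} (hf : ContDiff ℝ m f) (x : ℝ) :
    iteratedDeriv m (fun y => g (f y)) x = g (iteratedDeriv m f x) := by
  rw [iteratedDeriv_eq_iteratedFDeriv, iteratedDeriv_eq_iteratedFDeriv,
    show (fun y => g (f y)) = (⇑g ∘ f) from rfl, g.iteratedFDeriv_comp_left hf.contDiffAt le_rfl]
  rfl

lemma aux_decay {r : ℕ} {g : ℝ → ℂ} (hg : ContDiff ℝ r g)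
    (hper : Function.Periodic g 1) {k : ℤ} (hk : k ≠ 0) {m : ℕ} (hm : m ≤ r) :
    fourierCoeffOn zero_lt_one g k
      = (1 / (2 * π * Complex.I * k)) ^ m
        * fourierCoeffOn zero_lt_one (iteratedDeriv m g) k := by
  induction m with
  | zero => simp
  | succ m ih =>
    have hmr : (m : WithTop ℕ∞) < r := by exact_mod_cast Nat.lt_of_lt_of_le (Nat.lt_succ_self m) hm
    have hd : ∀ x ∈ Set.uIcc (0:ℝ) 1, HasDerivAt (iteratedDeriv m g) (iteratedDeriv (m+1) g x) x := by
      intro x _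
      rw [iteratedDeriv_succ]
      exact ((hg.differentiable_iteratedDeriv m hmr) x).hasDerivAt
    have hint : IntervalIntegrable (iteratedDeriv (m+1) g) MeasureTheory.volume 0 1 :=
      (hg.continuous_iteratedDeriv (m+1) (by exact_mod_cast hm)).intervalIntegrable 0 1
    have hb : iteratedDeriv m g 1 = iteratedDeriv m g 0 := by
      simpa using (aux_periodic_iteratedDeriv hper m) 0
    have key := fourierCoeffOn_of_hasDerivAt zero_lt_one hk hd hint
    rw [hb] at key
    rw [ih (Nat.le_of_succ_le hm), key]
    push_cast
    ring

lemma aux_parseval {h : ℝ → ℂ} (hcont : Continuous h) (hper : Function.Periodic h 1) :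
    Summable (fun k : ℤ => ‖fourierCoeffOn zero_lt_one h k‖ ^ 2) ∧
    ∑' k : ℤ, ‖fourierCoeffOn zero_lt_one h k‖ ^ 2 = ∫ x in (0:ℝ)..1, ‖h x‖ ^ 2 := by
  haveI : Fact ((0:ℝ) < 1) := ⟨zero_lt_one⟩
  set H : C(AddCircle (1:ℝ), ℂ) :=
    ⟨AddCircle.liftIco 1 0 h,
      AddCircle.liftIco_zero_continuous (by simpa using (hper 0).symm) hcont.continuousOn⟩ with hH
  have hHcoe : ∀ x ∈ Set.Ico (0:ℝ) 1, H x = h x := by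
    intro x hx
    exact AddCircle.liftIco_coe_apply (by simpa using hx)
  have hcoeff : ∀ k : ℤ, fourierCoeff (⇑H) k = fourierCoeffOn zero_lt_one h k := by
    intro k
    have := fourierCoeff_liftIco_eq (T := 1) (a := 0) h k
    rw [hH]
    simp only [ContinuousMap.coe_mk]
    rw [this]
    simp only [zero_add]
  set F2 := ContinuousMap.toLp (E := ℂ) 2 AddCircle.haarAddCircle ℂ H with hF2
  have hcoeff2 : ∀ k : ℤ, fourierCoeff (F2 : AddCircle (1:ℝ) → ℂ) k = fourierCoeffOn zero_lt_one h k := by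
    intro k; rw [fourierCoeff_toLp, hcoeff]
  have hsumm : Summable (fun k : ℤ => ‖fourierCoeffOn zero_lt_one h k‖ ^ 2) := by
    have hrepr := lp.memℓp (fourierBasis.repr F2)
    rw [memℓp_gen_iff (by norm_num)] at hrepr
    have : ∀ k : ℤ, ‖fourierBasis.repr F2 k‖ ^ (ENNReal.toReal 2)
        = ‖fourierCoeffOn zero_lt_one h k‖ ^ 2 := by
      intro k
      rw [fourierBasis_repr, hcoeff2,
        show ((2:ENNReal)).toReal = ((2:ℕ):ℝ) by norm_num, Real.rpow_natCast]
    exact (summable_congr this).mp hrepr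
  refine ⟨hsumm, ?_⟩
  have hpars := tsum_sq_fourierCoeff F2
  simp_rw [hcoeff2] at hpars
  rw [hpars]
  have e1 : ∫ t : AddCircle (1:ℝ), ‖F2 t‖ ^ 2 ∂AddCircle.haarAddCircle
      = ∫ t : AddCircle (1:ℝ), ‖H t‖ ^ 2 ∂AddCircle.haarAddCircle := by
    apply integral_congr_ae
    filter_upwards [ContinuousMap.coeFn_toLp (𝕜 := ℂ) (p := 2) AddCircle.haarAddCircle H] with t ht
    rw [ht]
  have e2 : ∫ t : AddCircle (1:ℝ), ‖H t‖ ^ 2 ∂AddCircle.haarAddCircle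
      = ∫ x in (0:ℝ)..0+1, ‖H (x : AddCircle (1:ℝ))‖ ^ 2 := by
    rw [AddCircle.intervalIntegral_preimage 1 0 (fun t => ‖H t‖ ^ 2),
      AddCircle.volume_eq_smul_haarAddCircle]
    simp
  have e3 : ∫ x in (0:ℝ)..0+1, ‖H (x : AddCircle (1:ℝ))‖ ^ 2 = ∫ x in (0:ℝ)..1, ‖h x‖ ^ 2 := by
    rw [zero_add]
    apply intervalIntegral.integral_congr_ae
    have hne : ∀ᵐ x : ℝ, x ≠ 1 := by
      rw [MeasureTheory.ae_iff]
      convert Real.volume_singleton (a := 1) using 2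
      ext x; simp
    filter_upwards [hne] with x hx hmem
    rw [Set.uIoc_of_le zero_le_one] at hmem
    exact congrArg (fun z => ‖z‖ ^ 2) (hHcoe x ⟨le_of_lt hmem.1, lt_of_le_of_ne hmem.2 hx⟩)
  rw [e1, e2, e3]

lemma aux_norm_coeff {r : ℕ} {g : ℝ → ℂ} (hg : ContDiff ℝ r g)
    (hper : Function.Periodic g 1) {k : ℤ} (hk : k ≠ 0) :
    ‖fourierCoeffOn zero_lt_one g k‖
      = (1 / (2 * π * |(k:ℝ)|)) ^ r * ‖fourierCoeffOn zero_lt_one (iteratedDeriv r g) k‖ := by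
  rw [aux_decay hg hper hk le_rfl, norm_mul, norm_pow]
  congr 3
  rw [norm_div, norm_one]
  congr 1
  simp [abs_of_pos pi_pos, Complex.norm_intCast]

lemma aux_coe_eq {g : ℝ → ℂ} (hcont : Continuous g) (hper : Function.Periodic g 1) (x : ℝ) :
    AddCircle.liftIco 1 0 g (x : AddCircle (1:ℝ)) = g x := by
  haveI : Fact ((0:ℝ) < 1) := ⟨zero_lt_one⟩
  have h1 : ((x : ℝ) : AddCircle (1:ℝ)) = ((Int.fract x : ℝ) : AddCircle (1:ℝ)) := by
    rw [eq_comm, ← sub_eq_zero, ← QuotientAddGroup.mk_sub]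
    rw [AddCircle.coe_eq_zero_iff]
    refine ⟨-⌊x⌋, ?_⟩
    push_cast [Int.fract]
    simp [zsmul_eq_mul]
  rw [h1, AddCircle.liftIco_coe_apply (by constructor <;> simp [Int.fract_nonneg x, Int.fract_lt_one x])]
  conv_rhs => rw [show x = Int.fract x + ⌊x⌋ by rw [Int.fract]; ring]
  rw [show (⌊x⌋ : ℝ) = ((⌊x⌋ : ℤ) : ℝ) * 1 by simp]
  exact ((hper.int_mul ⌊x⌋) (Int.fract x)).symm

lemma aux_hasSum {r : ℕ} (hr : 2 ≤ r) {g : ℝ → ℂ} (hg : ContDiff ℝ r g)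
    (hper : Function.Periodic g 1) (x : ℝ) :
    HasSum (fun k : ℤ =>
        fourierCoeffOn zero_lt_one g k * Complex.exp (2 * π * Complex.I * k * x)) (g x) := by
  haveI : Fact ((0:ℝ) < 1) := ⟨zero_lt_one⟩
  have hgc : Continuous g := hg.continuous
  set G : C(AddCircle (1:ℝ), ℂ) :=
    ⟨AddCircle.liftIco 1 0 g,
      AddCircle.liftIco_zero_continuous (by simpa using (hper 0).symm) hgc.continuousOn⟩ with hG
  have hGcoe : ∀ y : ℝ, G (y : AddCircle (1:ℝ)) = g y := fun y => aux_coe_eq hgc hper y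
  have hcoeff : ∀ k : ℤ, fourierCoeff (⇑G) k = fourierCoeffOn zero_lt_one g k := by
    intro k
    have := fourierCoeff_liftIco_eq (T := 1) (a := 0) g k
    rw [hG]
    simp only [ContinuousMap.coe_mk]
    rw [this]
    simp only [zero_add]
  -- summability of the Fourier coefficients
  have hds := aux_parseval ((hg.continuous_iteratedDeriv r (by exact_mod_cast le_rfl)))
      (aux_periodic_iteratedDeriv hper r)
  have hsum : Summable (fourierCoeff (⇑G)) := by
    rw [← Finset.summable_compl_iff ({0} : Finset ℤ)]
    apply Summable.of_norm
    have hmaj : Summable (fun k : {k : ℤ // k ∉ ({0} : Finset ℤ)} => (1 / ((k:ℤ):ℝ) ^ 2)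
        + ‖fourierCoeffOn zero_lt_one (iteratedDeriv r g) (k:ℤ)‖ ^ 2) := by
      apply Summable.add
      · exact ((summable_one_div_int_pow.mpr one_lt_two)).comp_injective Subtype.val_injective
      · exact hds.1.comp_injective Subtype.val_injective
    apply Summable.of_nonneg_of_le (fun _ => norm_nonneg _) _ hmaj
    rintro ⟨k, hk⟩
    have hk0 : k ≠ 0 := by simpa using hk
    have hk1 : (1:ℝ) ≤ |(k:ℝ)| := by
      rw [show ((1:ℝ)) = ((1:ℤ):ℝ) by norm_num, ← Int.cast_abs]
      exact_mod_cast Int.one_le_abs hk0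
    have hknorm := aux_norm_coeff hg hper hk0
    simp only [hcoeff, hknorm]
    set A := ‖fourierCoeffOn zero_lt_one (iteratedDeriv r g) k‖ with hA
    have hA0 : 0 ≤ A := norm_nonneg _
    have h1 : (1 / (2 * π * |(k:ℝ)|)) ^ r ≤ 1 / ((k:ℝ)) ^ 2 := by
      rw [div_pow, one_pow, ← sq_abs]
      apply div_le_div_of_nonneg_left one_pos.le (by positivity)
      calc |(k:ℝ)| ^ 2 ≤ |(k:ℝ)| ^ r := pow_le_pow_right₀ hk1 hr
        _ ≤ (2 * π * |(k:ℝ)|) ^ r := by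
            apply pow_le_pow_left₀ (abs_nonneg _)
            nlinarith [pi_gt_three, abs_nonneg (k:ℝ)]
    have h2 : A ≤ 1 + A ^ 2 := by nlinarith
    calc (1 / (2 * π * |(k:ℝ)|)) ^ r * A ≤ (1 / ((k:ℝ)) ^ 2) * (1 + A ^ 2) := by
          apply mul_le_mul h1 h2 hA0 (by positivity)
      _ ≤ 1 / ((k:ℝ)) ^ 2 + A ^ 2 := by
          rw [mul_add, mul_one]
          have : 1 / ((k:ℝ)) ^ 2 ≤ 1 := by
            rw [div_le_one (by positivity), ← sq_abs]; nlinarith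
          nlinarith [sq_nonneg A]
  have hps := has_pointwise_sum_fourier_series_of_summable hsum (x : AddCircle (1:ℝ))
  rw [hGcoe x] at hps
  convert hps using 2 with k
  rw [hcoeff, smul_eq_mul, fourier_coe_apply]
  congr 2
  push_cast
  ring

lemma aux_key_ineq {s : ℕ} (hs : 2 ≤ s) {m : ℕ} (hm : 2 ≤ m) :
    (1 / (m:ℝ)) ^ s ≤ 1 / ((m:ℝ) - 1) ^ (s-1) - 1 / (m:ℝ) ^ (s-1) := by
  set b : ℝ := (m:ℝ) with hb
  have hb2 : (2:ℝ) ≤ b := by rw [hb]; exact_mod_cast hm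
  set a : ℝ := b - 1 with ha
  have ha1 : (1:ℝ) ≤ a := by simp [ha]; linarith
  have ha0 : (0:ℝ) < a := by linarith
  have hb0 : (0:ℝ) < b := by linarith
  have e : a * (1 + 1/a) = b := by field_simp; linarith
  have h2 : (1 + 1/a) ≤ (1 + 1/a) ^ (s-1) := by
    have : (0:ℝ) < 1/a := by positivity
    exact le_self_pow₀ (by linarith) (by omega)
  have h3 : a ^ (s-1) * (1 + 1/a) ≤ b ^ (s-1) := by
    calc a ^ (s-1) * (1 + 1/a) ≤ a ^ (s-1) * (1 + 1/a) ^ (s-1) := by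
          apply mul_le_mul_of_nonneg_left h2 (by positivity)
      _ = b ^ (s-1) := by rw [← mul_pow, e]
  have hnum : a ^ (s-1) * (1 + b) ≤ b ^ s := by
    have hbs : b ^ s = b ^ (s-1) * b := by
      rw [← pow_succ]; congr 1; omega
    have : a ^ (s-1) * (1 + 1/a) * b ≤ b ^ (s-1) * b :=
      mul_le_mul_of_nonneg_right h3 hb0.le
    rw [← hbs] at this
    refine le_trans ?_ this
    have hba : 1 + b ≤ (1 + 1/a) * b := by
      rw [add_mul, one_mul]
      have : 1 ≤ 1/a * b := by
        rw [div_mul_eq_mul_div, one_mul, le_div_iff₀ ha0]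
        linarith
      linarith
    calc a ^ (s-1) * (1 + b) ≤ a ^ (s-1) * ((1 + 1/a) * b) := by
          apply mul_le_mul_of_nonneg_left hba (by positivity)
      _ = a ^ (s-1) * (1 + 1/a) * b := by ring
  rw [div_pow, one_pow, le_sub_iff_add_le]
  have hbs : b ^ s = b ^ (s-1) * b := by rw [← pow_succ]; congr 1; omega
  have hsum : 1 / b ^ s + 1 / b ^ (s-1) = (1 + b) / b ^ s := by
    rw [hbs]; field_simp
  rw [hsum, div_le_div_iff₀ (by positivity) (by positivity), one_mul]
  calc (1 + b) * a ^ (s-1) = a ^ (s-1) * (1 + b) := by ring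
    _ ≤ b ^ s := hnum

-- telescoping bound for natural numbers

lemma aux_nat_tail {s n : ℕ} (hs : 2 ≤ s) (hn : 1 ≤ n) (M : ℕ) :
    ∑ m ∈ Finset.Ioc n M, (1 / (m:ℝ)) ^ s ≤ 1 / (n:ℝ) ^ (s-1) - 1 / ((max n M : ℕ):ℝ) ^ (s-1) := by
  induction M with
  | zero => simp [Finset.Ioc_eq_empty_of_le (Nat.zero_le n), Nat.max_eq_left (Nat.zero_le n)]
  | succ M ih =>
    rcases le_or_gt (M+1) n with hMn | hMn
    · rw [Finset.Ioc_eq_empty_of_le (by omega), Nat.max_eq_left (by omega)]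
      simp
    · have hnM : n ≤ M := by omega
      rw [Finset.sum_Ioc_succ_top hnM, Nat.max_eq_right (by omega)]
      have hkey := aux_key_ineq hs (m := M+1) (by omega)
      have : ((M+1:ℕ):ℝ) - 1 = (M:ℝ) := by push_cast; ring
      rw [this] at hkey
      rw [Nat.max_eq_right hnM] at ih
      push_cast at hkey ⊢
      linarith

lemma aux_int_tail {s n : ℕ} (hs : 2 ≤ s) (hn : 1 ≤ n) (F : Finset ℤ)
    (hF : ∀ k ∈ F, (n:ℤ) < |k|) :
    ∑ k ∈ F, (1 / |(k:ℝ)|) ^ s ≤ 2 / (n:ℝ) ^ (s-1) := by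
  have hnat : ∀ F' : Finset ℕ, (∀ m ∈ F', n < m) →
      ∑ m ∈ F', (1 / (m:ℝ)) ^ s ≤ 1 / (n:ℝ) ^ (s-1) := by
    intro F' h
    have h2 := aux_nat_tail hs hn (F'.sup id)
    refine le_trans (Finset.sum_le_sum_of_subset_of_nonneg
      (fun m hm => Finset.mem_Ioc.mpr ⟨h m hm, Finset.le_sup (f := id) hm⟩)
      (fun m _ _ => by positivity)) (le_trans h2 ?_)
    apply sub_le_self
    positivity
  have hpart : ∀ G : Finset ℤ, G ⊆ F → (∀ k ∈ G, ∀ l ∈ G, k.natAbs = l.natAbs → k = l) →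
      ∑ k ∈ G, (1 / |(k:ℝ)|) ^ s ≤ 1 / (n:ℝ) ^ (s-1) := by
    intro G hGF hinj
    have e : ∑ k ∈ G, (1 / |(k:ℝ)|) ^ s = ∑ m ∈ G.image Int.natAbs, (1 / (m:ℝ)) ^ s := by
      rw [Finset.sum_image hinj]
      apply Finset.sum_congr rfl
      intro k _
      simp [Nat.cast_natAbs]
    rw [e]
    apply hnat
    intro m hm
    obtain ⟨k, hkG, hk⟩ := Finset.mem_image.mp hm
    have h3 := hF k (hGF hkG)
    rw [Int.abs_eq_natAbs] at h3
    omega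
  rw [← Finset.sum_filter_add_sum_filter_not F (fun k => 0 < k)]
  have h1 := hpart (F.filter (fun k => 0 < k)) (Finset.filter_subset _ _)
    (by intro k hk l hl he
        simp only [Finset.mem_filter] at hk hl
        omega)
  have h2 := hpart (F.filter (fun k => ¬ 0 < k)) (Finset.filter_subset _ _)
    (by intro k hk l hl he
        simp only [Finset.mem_filter] at hk hl
        have hk0 := hF k hk.1
        have hl0 := hF l hl.1
        rw [Int.abs_eq_natAbs] at hk0
        rw [Int.abs_eq_natAbs] at hl0
        omega)
  have he2 : 2 / (n:ℝ) ^ (s-1) = 1 / (n:ℝ) ^ (s-1) + 1 / (n:ℝ) ^ (s-1) := by ring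
  rw [he2]
  exact add_le_add h1 h2

lemma aux_coord {r n : ℕ} (hr : 2 ≤ r) (hn : 1 ≤ n) {g : ℝ → ℂ}
    (hg : ContDiff ℝ r g) (hper : Function.Periodic g 1) (x : ℝ) :
    ‖g x - ∑ k ∈ Finset.Icc (-(n:ℤ)) (n:ℤ),
        fourierCoeffOn zero_lt_one g k * Complex.exp (2 * π * Complex.I * k * x)‖
      ≤ Real.sqrt (2 / ((2*π)^(2*r) * (n:ℝ)^(2*r-1)))
        * Real.sqrt (∫ t in (0:ℝ)..1, ‖iteratedDeriv r g t‖^2) := by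
  set u : ℤ → ℂ := fun k =>
    fourierCoeffOn zero_lt_one g k * Complex.exp (2 * π * Complex.I * k * x) with hu
  have hhs := aux_hasSum hr hg hper x
  have hsummable : Summable u := hhs.summable
  have hnormexp : ∀ k : ℤ, ‖Complex.exp (2 * π * Complex.I * k * x)‖ = 1 := by
    intro k
    have : (2 * (π:ℂ) * Complex.I * k * x) = (((2 * π * k * x : ℝ)):ℂ) * Complex.I := by
      push_cast; ring
    rw [this, Complex.norm_exp_ofReal_mul_I]
  set s₀ : Finset ℤ := Finset.Icc (-(n:ℤ)) (n:ℤ) with hs₀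
  have hsplit := Summable.sum_add_tsum_compl (s := s₀) hsummable
  have hdiff : g x - ∑ k ∈ s₀, u k = ∑' (k : ((s₀ : Set ℤ)ᶜ : Set ℤ)), u k := by
    rw [← hhs.tsum_eq, ← hsplit]; ring
  rw [hdiff]
  have hnorm : Summable (fun k : ℤ => ‖u k‖) := summable_norm_iff.mpr hsummable
  refine le_trans (norm_tsum_le_tsum_norm (hnorm.subtype _)) ?_
  have hds := aux_parseval (hg.continuous_iteratedDeriv r (by exact_mod_cast le_rfl))
      (aux_periodic_iteratedDeriv hper r)
  set a : ℤ → ℂ := fun k => fourierCoeffOn zero_lt_one (iteratedDeriv r g) k with ha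
  set Y := ∫ t in (0:ℝ)..1, ‖iteratedDeriv r g t‖^2 with hY
  have hY0 : 0 ≤ Y := by
    rw [← hds.2]
    exact tsum_nonneg (fun k => by positivity)
  set X := 2 / ((2*π)^(2*r) * (n:ℝ)^(2*r-1)) with hX
  have hX0 : 0 ≤ X := by positivity
  apply Summable.tsum_le_of_sum_le (hnorm.subtype _)
  intro F
  set F' : Finset ℤ := F.image Subtype.val with hF'
  have hsumeq : ∑ j ∈ F, ‖u ↑j‖ = ∑ k ∈ F', ‖u k‖ := by
    rw [hF', Finset.sum_image]
    intro p _ q _ h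
    exact Subtype.val_injective h
  simp only [Function.comp_apply]
  rw [hsumeq]
  have hFmem : ∀ k ∈ F', (n:ℤ) < |k| := by
    intro k hk
    obtain ⟨j, hj, rfl⟩ := Finset.mem_image.mp hk
    have h2 := j.2
    simp only [hs₀, Set.mem_compl_iff, Finset.coe_Icc, Set.mem_Icc, not_and_or, not_le] at h2
    rcases h2 with h2 | h2
    · rw [abs_of_neg (by omega)]; omega
    · rw [abs_of_pos (by omega)]; omega
  have hterm : ∀ k ∈ F', ‖u k‖ = (1/(2*π*|(k:ℝ)|))^r * ‖a k‖ := by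
    intro k hk
    have hk0 : k ≠ 0 := by
      have := hFmem k hk
      intro h; rw [h] at this; simp at this; omega
    rw [hu]
    simp only
    rw [norm_mul, hnormexp, mul_one, aux_norm_coeff hg hper hk0, ha]
  rw [Finset.sum_congr rfl hterm]
  have hCS := Finset.sum_mul_sq_le_sq_mul_sq F' (fun k => (1/(2*π*|(k:ℝ)|))^r)
    (fun k => ‖a k‖)
  have hp : ∑ k ∈ F', ((1/(2*π*|(k:ℝ)|))^r)^2 ≤ X := by
    have he : ∀ k : ℤ, ((1/(2*π*|(k:ℝ)|))^r)^2 = (1/(2*π))^(2*r) * (1/|(k:ℝ)|)^(2*r) := by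
      intro k
      rw [← pow_mul, mul_comm r 2, ← mul_pow]
      congr 1
      rw [div_mul_div_comm, one_mul]
    simp_rw [he]
    rw [← Finset.mul_sum]
    have htail := aux_int_tail (s := 2*r) (n := n) (by omega) hn F' hFmem
    calc (1/(2*π))^(2*r) * ∑ k ∈ F', (1/|(k:ℝ)|)^(2*r)
        ≤ (1/(2*π))^(2*r) * (2 / (n:ℝ)^(2*r-1)) := by
          apply mul_le_mul_of_nonneg_left htail (by positivity)
      _ = X := by
          rw [hX, div_pow, one_pow]
          rw [div_mul_div_comm, one_mul]
  have hq : ∑ k ∈ F', ‖a k‖^2 ≤ Y := by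
    exact le_trans (Summable.sum_le_tsum F' (fun k _ => by positivity) hds.1) (le_of_eq hds.2)
  have hpq0 : 0 ≤ ∑ k ∈ F', (1/(2*π*|(k:ℝ)|))^r * ‖a k‖ :=
    Finset.sum_nonneg (fun k _ => by positivity)
  have h1 : (∑ k ∈ F', (1/(2*π*|(k:ℝ)|))^r * ‖a k‖)^2 ≤ X * Y := by
    refine le_trans hCS ?_
    apply mul_le_mul hp hq (Finset.sum_nonneg (fun k _ => by positivity)) hX0
  calc ∑ k ∈ F', (1/(2*π*|(k:ℝ)|))^r * ‖a k‖
      ≤ Real.sqrt (X * Y) := by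
        rw [← Real.sqrt_sq hpq0]
        exact Real.sqrt_le_sqrt h1
    _ = Real.sqrt X * Real.sqrt Y := Real.sqrt_mul hX0 Y

theorem fourier_partial_sum_error {d : ℕ} (r n : ℕ) (hr : 2 ≤ r) (hn : 1 ≤ n)
    (f : ℝ → EuclideanSpace ℝ (Fin d))
    (hper : ∀ x : ℝ, f (x + 1) = f x)
    (hf : ContDiff ℝ r f)
    (c : ℤ → Fin d → ℂ)
    (hc : ∀ (k : ℤ) (i : Fin d),
      c k i = ∫ x in (0:ℝ)..1, (f x i : ℂ) * Complex.exp (-2 * π * Complex.I * k * x))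
    (S : ℝ → EuclideanSpace ℂ (Fin d))
    (hS : ∀ (t : ℝ) (i : Fin d),
      S t i = ∑ k ∈ Finset.Icc (-(n : ℤ)) (n : ℤ),
        c k i * Complex.exp (2 * π * Complex.I * k * t)) :
    ∀ x : ℝ,
      ‖(show EuclideanSpace ℂ (Fin d) from WithLp.toLp 2 (fun i => (f x i : ℂ))) - S x‖ ≤
        Real.sqrt (2 * d) / (2 * π) ^ r * (n : ℝ) ^ ((1 : ℝ) / 2 - r) *
          Real.sqrt (∫ x in (0:ℝ)..1, ‖iteratedDeriv r f x‖ ^ 2) := by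
  intro x
  rcases Nat.eq_zero_or_pos d with hd | hd
  · subst hd
    have hL : ‖(show EuclideanSpace ℂ (Fin 0) from WithLp.toLp 2 (fun i => (f x i : ℂ))) - S x‖ = 0 := by
      simp [EuclideanSpace.norm_eq]
    rw [hL]
    positivity
  -- coordinate functions
  set L : Fin d → (EuclideanSpace ℝ (Fin d) →L[ℝ] ℂ) :=
    fun i => Complex.ofRealCLM.comp (EuclideanSpace.proj i) with hL
  set g : Fin d → ℝ → ℂ := fun i y => ((f y i : ℝ) : ℂ) with hgdef
  have hgL : ∀ i, g i = fun y => L i (f y) := fun i => rfl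
  have hci : ∀ i, ContDiff ℝ r (g i) := fun i => ((L i).contDiff).comp hf
  have hpi : ∀ i, Function.Periodic (g i) 1 := by
    intro i y
    simp only [hgdef, hper y]
  have hcoeff : ∀ (k : ℤ) (i : Fin d), c k i = fourierCoeffOn zero_lt_one (g i) k := by
    intro k i
    rw [hc k i, fourierCoeffOn_eq_integral]
    have hfour : ∀ y : ℝ, (fourier (-k) (y : AddCircle ((1:ℝ)-0)))
        = Complex.exp (-2*π*Complex.I*k*y) := by
      intro y
      rw [fourier_coe_apply]
      congr 1
      push_cast
      ring
    simp only [hfour, smul_eq_mul, sub_zero]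
    norm_num
    apply intervalIntegral.integral_congr
    intro y _
    simp [hgdef]
    ring
  -- the difference vector
  set v : EuclideanSpace ℂ (Fin d) :=
    (show EuclideanSpace ℂ (Fin d) from WithLp.toLp 2 (fun i => (f x i : ℂ))) - S x with hv
  have hvi : ∀ i, v i = g i x - ∑ k ∈ Finset.Icc (-(n:ℤ)) (n:ℤ),
      fourierCoeffOn zero_lt_one (g i) k * Complex.exp (2 * π * Complex.I * k * x) := by
    intro i
    rw [hv]
    rw [PiLp.sub_apply]
    rw [hS x i]
    congr 1
    apply Finset.sum_congr rfl
    intro k _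
    rw [hcoeff k i]
  set X := 2 / ((2*π)^(2*r) * (n:ℝ)^(2*r-1)) with hX
  have hX0 : (0:ℝ) ≤ X := by positivity
  set Y : Fin d → ℝ := fun i => ∫ t in (0:ℝ)..1, ‖iteratedDeriv r (g i) t‖^2 with hY
  have hY0 : ∀ i, 0 ≤ Y i := by
    intro i
    apply intervalIntegral.integral_nonneg zero_le_one
    intro t _
    positivity
  have hbound : ∀ i, ‖v i‖ ≤ Real.sqrt X * Real.sqrt (Y i) := by
    intro i
    rw [hvi i]
    exact aux_coord hr hn (hci i) (hpi i) x
  -- derivative components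
  have hderiv_comp : ∀ (i : Fin d) (t : ℝ),
      iteratedDeriv r (g i) t = (((iteratedDeriv r f t) i : ℝ) : ℂ) := by
    intro i t
    rw [hgL i]
    exact aux_clm_iteratedDeriv (L i) hf t
  have hYsum : ∑ i, Y i = ∫ t in (0:ℝ)..1, ‖iteratedDeriv r f t‖^2 := by
    rw [hY]
    rw [← intervalIntegral.integral_finset_sum]
    · apply intervalIntegral.integral_congr
      intro t _
      simp only [hderiv_comp]
      rw [EuclideanSpace.norm_eq, Real.sq_sqrt (Finset.sum_nonneg fun i _ => by positivity)]
      apply Finset.sum_congr rfl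
      intro i _
      rw [Complex.norm_real]
    · intro i _
      apply Continuous.intervalIntegrable
      exact (((hci i).continuous_iteratedDeriv r le_rfl).norm.pow 2)
  -- assemble
  have hnv : ‖v‖ ≤ Real.sqrt X * Real.sqrt (∫ t in (0:ℝ)..1, ‖iteratedDeriv r f t‖^2) := by
    rw [EuclideanSpace.norm_eq]
    have h1 : ∑ i, ‖v i‖^2 ≤ ∑ i, X * Y i := by
      apply Finset.sum_le_sum
      intro i _
      calc ‖v i‖^2 ≤ (Real.sqrt X * Real.sqrt (Y i))^2 := by
            apply pow_le_pow_left₀ (norm_nonneg _) (hbound i)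
        _ = X * Y i := by
            rw [mul_pow, Real.sq_sqrt hX0, Real.sq_sqrt (hY0 i)]
    calc Real.sqrt (∑ i, ‖v i‖^2) ≤ Real.sqrt (∑ i, X * Y i) := Real.sqrt_le_sqrt h1
      _ = Real.sqrt (X * ∑ i, Y i) := by rw [← Finset.mul_sum]
      _ = Real.sqrt X * Real.sqrt (∑ i, Y i) := Real.sqrt_mul hX0 _
      _ = Real.sqrt X * Real.sqrt (∫ t in (0:ℝ)..1, ‖iteratedDeriv r f t‖^2) := by rw [hYsum]
  refine le_trans hnv ?_
  apply mul_le_mul_of_nonneg_right ?_ (Real.sqrt_nonneg _)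
  -- the constant comparison
  have hnpos : (0:ℝ) < n := by exact_mod_cast hn
  have hexp : ((2*r-1 : ℕ):ℝ) = 2*(r:ℝ) - 1 := by
    have : 1 ≤ 2*r := by omega
    push_cast [Nat.cast_sub this]
    ring
  have e1 : Real.sqrt ((n:ℝ)^(2*r-1)) = (n:ℝ) ^ ((2*(r:ℝ)-1)/2) := by
    rw [Real.sqrt_eq_rpow, ← Real.rpow_natCast (n:ℝ) (2*r-1), ← Real.rpow_mul hnpos.le, hexp]
    ring_nf
  have e2 : (n:ℝ)^((1:ℝ)/2 - r) = ((n:ℝ) ^ ((2*(r:ℝ)-1)/2))⁻¹ := by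
    rw [← Real.rpow_neg hnpos.le]
    congr 1
    ring
  have e3 : Real.sqrt X = Real.sqrt 2 / ((2*π)^r * (n:ℝ) ^ ((2*(r:ℝ)-1)/2)) := by
    rw [hX, Real.sqrt_div (by norm_num : (0:ℝ) ≤ 2), Real.sqrt_mul (by positivity),
      show (2*π)^(2*r) = ((2*π)^r)^2 from by rw [← pow_mul, mul_comm 2 r],
      Real.sqrt_sq (by positivity), e1]
  rw [e3, e2]
  have hB : (0:ℝ) < (2*π)^r * (n:ℝ) ^ ((2*(r:ℝ)-1)/2) := by
    have := Real.rpow_pos_of_pos hnpos ((2*(r:ℝ)-1)/2)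
    positivity
  have hRHS : Real.sqrt (2*d) / (2*π)^r * ((n:ℝ) ^ ((2*(r:ℝ)-1)/2))⁻¹
      = Real.sqrt (2*d) / ((2*π)^r * (n:ℝ) ^ ((2*(r:ℝ)-1)/2)) := by
    field_simp
  rw [hRHS]
  rw [div_le_div_iff_of_pos_right hB]
  apply Real.sqrt_le_sqrt
  have : (1:ℝ) ≤ (d:ℝ) := by exact_mod_cast hd
  nlinarith
end

section
/- Let τ > 0, t ≥ 0 with t/τ ≤ π, and let X : ℝ → ℝ^d be a differentiable curve such that ‖X(s)‖ = 1 and ‖X′(s)‖ ≤ 1/τ for all s ∈ [0, t]. Then ⟨X(0), X(t)⟩ ≥ cos(t/τ); equivalently, the angle between X(0) and X(t) is at most t/τ. -/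
open Real

set_option maxHeartbeats 800000 in
lemma aux_sqrt_ineq (τ ε x c : ℝ) (hτ : 0 < τ) (hε : 0 < ε) (hε1 : ε ≤ 1)
    (hεπ : ε * π < τ) (hx : 0 ≤ x) (hxπ : x < τ * π)
    (hc1 : -1 ≤ c) (hc : c = Real.cos ((1+ε)*x/τ) - ε*x) :
    Real.sqrt (1 - c^2) * (1/τ) < ε + (1+ε)/τ * Real.sin ((1+ε)*x/τ) := by
  have hπ := Real.pi_pos
  set α := (1+ε)*x/τ with hαdef
  have hα0 : 0 ≤ α := by positivity
  have hxτα : (1+ε)*x = τ*α := by rw [hαdef]; field_simp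
  have hααπ : α < (1+ε)*π := by
    rw [hαdef, div_lt_iff₀ hτ]; nlinarith
  have hαπ : α < π := by
    by_contra h
    push_neg at h
    have h2 : α ≤ 2*π := by nlinarith
    have hcos : Real.cos α ≤ -Real.cos (ε*π) := by
      have e1 : Real.cos α = Real.cos (2*π - α) := (Real.cos_two_pi_sub α).symm
      have e2 : Real.cos (2*π - α) ≤ Real.cos ((1-ε)*π) :=
        Real.cos_le_cos_of_nonneg_of_le_pi (by nlinarith) (by nlinarith) (by nlinarith)
      have e3 : Real.cos ((1-ε)*π) = -Real.cos (ε*π) := by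
        rw [show (1-ε)*π = π - ε*π by ring, Real.cos_pi_sub]
      calc Real.cos α = Real.cos (2*π - α) := e1
        _ ≤ Real.cos ((1-ε)*π) := e2
        _ = -Real.cos (ε*π) := e3
    have hq : 1 - (ε*π)^2/2 ≤ Real.cos (ε*π) := Real.one_sub_sq_div_two_le_cos
    have h3 : ε*x ≤ 1 + Real.cos α := by rw [hc] at hc1; linarith
    have a1 : ε*x ≤ (ε*π)^2/2 := by linarith
    have b1 : τ*π ≤ τ*α := mul_le_mul_of_nonneg_left h hτ.le
    have b2 : (1+ε)*x ≤ 2*x := by nlinarith [mul_le_mul_of_nonneg_right hε1 hx]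
    have a2 : τ*π ≤ 2*x := by linarith
    have a3 : ε*(τ*π) ≤ ε*(2*x) := mul_le_mul_of_nonneg_left a2 hε.le
    have a4 : (ε*π)*(ε*π) < (ε*π)*τ := mul_lt_mul_of_pos_left hεπ (mul_pos hε hπ)
    nlinarith
  have hs0 : 0 ≤ Real.sin α := Real.sin_nonneg_of_nonneg_of_le_pi hα0 hαπ.le
  set s := Real.sin α with hsdef
  set c0 := Real.cos α with hc0def
  have hpyth : s^2 + c0^2 = 1 := Real.sin_sq_add_cos_sq α
  have hK : 2*(ε*x)*c0 < ε^2*τ^2 + 2*ε*τ*s := by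
    have l2 : 0 < ε^2*τ^2 := by positivity
    rcases le_or_gt c0 0 with h0 | h0
    · have l1 : (ε*x)*c0 ≤ 0 := mul_nonpos_of_nonneg_of_nonpos (mul_nonneg hε.le hx) h0
      have l3 : 0 ≤ 2*ε*τ*s := by positivity
      linarith
    · have hαhalf : α < π/2 := by
        by_contra h
        push_neg at h
        have := Real.cos_nonpos_of_pi_div_two_le_of_le h (by linarith)
        linarith
      have hαc0 : α * c0 ≤ s := by
        rcases eq_or_lt_of_le hα0 with h1 | h1
        · rw [← h1]; simpa using hs0
        · have ht1 := Real.lt_tan h1 hαhalf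
          rw [Real.tan_eq_sin_div_cos] at ht1
          have h5 : α * c0 < (s / c0) * c0 := mul_lt_mul_of_pos_right ht1 h0
          rw [div_mul_cancel₀ s (ne_of_gt h0)] at h5
          linarith
      have hxα : x ≤ τ*α := by linarith [mul_nonneg hε.le hx]
      have m1 : ε*(x*c0) ≤ ε*(τ*α*c0) :=
        mul_le_mul_of_nonneg_left (mul_le_mul_of_nonneg_right hxα h0.le) hε.le
      have m2 : ε*τ*(α*c0) ≤ ε*τ*s := mul_le_mul_of_nonneg_left hαc0 (mul_nonneg hε.le hτ.le)
      linarith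
  have hR : 0 < ε*τ + (1+ε)*s := by
    have := mul_nonneg (by linarith : (0:ℝ) ≤ 1+ε) hs0
    nlinarith [mul_pos hε hτ]
  have hsq : Real.sqrt (1-c^2) < ε*τ + (1+ε)*s := by
    rw [Real.sqrt_lt' hR]
    rw [hc]
    have expand1 : 1 - (c0 - ε*x)^2 = s^2 + 2*(ε*x)*c0 - (ε*x)^2 := by
      linear_combination -hpyth
    have expand2 : (ε*τ + (1+ε)*s)^2
        = ε^2*τ^2 + 2*ε*τ*s + (2*ε*ε*τ*s + (1+ε)^2*s^2) := by ring
    have h6 : s^2 ≤ (1+ε)^2*s^2 := by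
      nlinarith [mul_nonneg hε.le (sq_nonneg s), mul_nonneg (mul_nonneg hε.le hε.le) (sq_nonneg s)]
    have h7 : 0 ≤ 2*ε*ε*τ*s := by positivity
    have h8 : 0 ≤ (ε*x)^2 := sq_nonneg _
    rw [expand1, expand2]
    linarith [hK]
  calc Real.sqrt (1-c^2) * (1/τ) < (ε*τ + (1+ε)*s)*(1/τ) :=
        mul_lt_mul_of_pos_right hsq (by positivity)
    _ = ε + (1+ε)/τ * s := by field_simp

theorem angle_bound_of_slow_curve {d : ℕ}
    (τ t : ℝ) (hτ : 0 < τ) (ht : 0 ≤ t) (htτ : t / τ ≤ π)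
    (X : ℝ → EuclideanSpace ℝ (Fin d)) (hX : Differentiable ℝ X)
    (hXnorm : ∀ s ∈ Set.Icc (0 : ℝ) t, ‖X s‖ = 1)
    (hXder : ∀ s ∈ Set.Icc (0 : ℝ) t, ‖deriv X s‖ ≤ 1 / τ) :
    Real.cos (t / τ) ≤ (inner ℝ (X 0) (X t) : ℝ) := by
  have hπ := Real.pi_pos
  have htτ' : t ≤ τ * π := by
    rw [div_le_iff₀ hτ] at htτ; linarith
  have hf' : ∀ s : ℝ, HasDerivAt (fun u => (inner ℝ (X 0) (X u) : ℝ))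
      (inner ℝ (X 0) (deriv X s)) s := by
    intro s
    have h := (hasDerivAt_const s (X 0)).inner ℝ (hX s).hasDerivAt
    simpa using h
  have horth : ∀ x ∈ Set.Ico (0:ℝ) t, (inner ℝ (X x) (deriv X x) : ℝ) = 0 := by
    intro x hx
    have hud : UniqueDiffWithinAt ℝ (Set.Icc x t) x :=
      (uniqueDiffOn_Icc hx.2) x (Set.left_mem_Icc.2 hx.2.le)
    have h1 : HasDerivWithinAt (fun u => (inner ℝ (X u) (X u) : ℝ))
        ((inner ℝ (X x) (deriv X x) : ℝ) + inner ℝ (deriv X x) (X x)) (Set.Icc x t) x :=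
      (((hX x).hasDerivAt).inner ℝ ((hX x).hasDerivAt)).hasDerivWithinAt
    have hcst : ∀ y ∈ Set.Icc x t, (inner ℝ (X y) (X y) : ℝ) = 1 := by
      intro y hy
      have hy1 : ‖X y‖ = 1 := hXnorm y ⟨le_trans hx.1 hy.1, hy.2⟩
      rw [real_inner_self_eq_norm_sq, hy1]; norm_num
    have h2 : HasDerivWithinAt (fun u => (inner ℝ (X u) (X u) : ℝ)) 0 (Set.Icc x t) x :=
      (hasDerivWithinAt_const x (Set.Icc x t) (1:ℝ)).congr hcst
        (hcst x (Set.left_mem_Icc.2 hx.2.le))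
    have heq := h1.derivWithin hud
    rw [h2.derivWithin hud] at heq
    have hsymm := real_inner_comm (deriv X x) (X x)
    linarith
  have key : ∀ ε : ℝ, 0 < ε → ε ≤ 1 → ε * π < τ →
      -(inner ℝ (X 0) (X t) : ℝ) ≤ ε*t - Real.cos ((1+ε)*t/τ) := by
    intro ε hε hε1 hεπ
    have hBderiv : ∀ s : ℝ, HasDerivAt (fun u : ℝ => ε*u - Real.cos ((1+ε)*u/τ))
        (ε + (1+ε)/τ * Real.sin ((1+ε)*s/τ)) s := by
      intro s
      have h1 : HasDerivAt (fun u : ℝ => ε*u) ε s := by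
        simpa using (hasDerivAt_id s).const_mul ε
      have h2 : HasDerivAt (fun u : ℝ => (1+ε)*u/τ) ((1+ε)/τ) s := by
        simpa using ((hasDerivAt_id s).const_mul (1+ε)).div_const τ
      have h3 : HasDerivAt (fun u : ℝ => Real.cos ((1+ε)*u/τ))
          (-Real.sin ((1+ε)*s/τ) * ((1+ε)/τ)) s :=
        h2.cos
      have h4 := h1.sub h3
      exact h4.congr_deriv (by ring)
    have hcontf : ContinuousOn (fun u => -(inner ℝ (X 0) (X u) : ℝ)) (Set.Icc 0 t) :=
      ((continuous_const.inner hX.continuous).neg).continuousOn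
    have hderivf : ∀ x ∈ Set.Ico (0:ℝ) t,
        HasDerivWithinAt (fun u => -(inner ℝ (X 0) (X u) : ℝ))
          (-(inner ℝ (X 0) (deriv X x) : ℝ)) (Set.Ici x) x :=
      fun x _ => ((hf' x).neg).hasDerivWithinAt
    have h10 : (inner ℝ (X 0) (X 0) : ℝ) = 1 := by
      rw [real_inner_self_eq_norm_sq, hXnorm 0 ⟨le_refl 0, ht⟩]; norm_num
    have ha : -(inner ℝ (X 0) (X 0) : ℝ) ≤ ε*0 - Real.cos ((1+ε)*0/τ) := by
      rw [h10]; norm_num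
    have hbound : ∀ x ∈ Set.Ico (0:ℝ) t,
        -(inner ℝ (X 0) (X x) : ℝ) = ε*x - Real.cos ((1+ε)*x/τ) →
        -(inner ℝ (X 0) (deriv X x) : ℝ) < ε + (1+ε)/τ * Real.sin ((1+ε)*x/τ) := by
      intro x hx heq
      have hx' : x ∈ Set.Icc 0 t := ⟨hx.1, hx.2.le⟩
      set c : ℝ := inner ℝ (X 0) (X x) with hcdef
      have hcval : c = Real.cos ((1+ε)*x/τ) - ε*x := by linarith
      have hcabs : |c| ≤ 1 := by
        have h := abs_real_inner_le_norm (X 0) (X x)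
        rw [hXnorm 0 ⟨le_refl 0, ht⟩, hXnorm x hx'] at h
        simpa using h
      have hc1 : -1 ≤ c := (abs_le.1 hcabs).1
      have hnorm : ‖X 0 - c • X x‖^2 = 1 - c^2 := by
        rw [norm_sub_sq_real, real_inner_smul_right, norm_smul,
          hXnorm 0 ⟨le_refl 0, ht⟩, hXnorm x hx', ← hcdef, Real.norm_eq_abs]
        linear_combination sq_abs c
      have hdecomp : (inner ℝ (X 0) (deriv X x) : ℝ)
          = inner ℝ (X 0 - c • X x) (deriv X x) := by
        rw [inner_sub_left, real_inner_smul_left, horth x hx]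
        ring
      have hCS : -(inner ℝ (X 0) (deriv X x) : ℝ) ≤ Real.sqrt (1 - c^2) * (1/τ) := by
        have h1 : -(inner ℝ (X 0) (deriv X x) : ℝ)
            ≤ ‖X 0 - c • X x‖ * ‖deriv X x‖ := by
          rw [hdecomp]
          have h2 := abs_real_inner_le_norm (X 0 - c • X x) (deriv X x)
          linarith [neg_abs_le (inner ℝ (X 0 - c • X x) (deriv X x) : ℝ)]
        have h2 : ‖X 0 - c • X x‖ = Real.sqrt (1 - c^2) := by
          rw [← hnorm, Real.sqrt_sq (norm_nonneg _)]
        rw [h2] at h1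
        exact h1.trans (mul_le_mul_of_nonneg_left (hXder x hx') (Real.sqrt_nonneg _))
      exact lt_of_le_of_lt hCS
        (aux_sqrt_ineq τ ε x c hτ hε hε1 hεπ hx.1
          (lt_of_lt_of_le hx.2 htτ') hc1 hcval)
    have happ := image_le_of_deriv_right_lt_deriv_boundary
      hcontf hderivf ha hBderiv hbound (Set.right_mem_Icc.2 ht)
    exact happ
  have hlim : Filter.Tendsto (fun ε : ℝ => ε*t - Real.cos ((1+ε)*t/τ))
      (nhdsWithin 0 (Set.Ioi 0)) (nhds (-Real.cos (t/τ))) := by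
    have hcont : Continuous fun ε : ℝ => ε*t - Real.cos ((1+ε)*t/τ) := by fun_prop
    have h0 : (fun ε : ℝ => ε*t - Real.cos ((1+ε)*t/τ)) 0 = -Real.cos (t/τ) := by norm_num
    exact h0 ▸ (hcont.tendsto 0).mono_left nhdsWithin_le_nhds
  have hev : ∀ᶠ ε in nhdsWithin (0:ℝ) (Set.Ioi 0),
      -(inner ℝ (X 0) (X t) : ℝ) ≤ ε*t - Real.cos ((1+ε)*t/τ) := by
    have hm : (0:ℝ) < min 1 (τ/π) := lt_min one_pos (div_pos hτ hπ)
    filter_upwards [Ioo_mem_nhdsGT_of_mem (Set.left_mem_Ico.2 hm)] with ε hεm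
    refine key ε hεm.1 (le_of_lt (lt_of_lt_of_le hεm.2 (min_le_left _ _))) ?_
    have h := lt_of_lt_of_le hεm.2 (min_le_right _ _)
    rw [lt_div_iff₀ hπ] at h
    linarith
  have hfin := ge_of_tendsto hlim hev
  linarith
end

section
/- Let τ > 0, t ≥ 0, and let γ : ℝ → ℝ^d be a differentiable curve such that ⟨γ′(ξ), γ′(η)⟩ ≥ cos((ξ − η)/τ) for all ξ, η ∈ [0, t]. Then τ²·(2 − 2·cos(t/τ)) ≤ ‖γ(t) − γ(0)‖². (This uses the identity ∫₀ᵗ∫₀ᵗ cos((ξ−η)/τ) dη dξ = τ²(2 − 2cos(t/τ)) together with ∫₀ᵗ∫₀ᵗ ⟨γ′(ξ), γ′(η)⟩ dη dξ = ‖γ(t) − γ(0)‖².) -/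
open Real MeasureTheory

private lemma clm_comp_intervalIntegrable {E F : Type*} [NormedAddCommGroup E]
    [NormedSpace ℝ E] [NormedAddCommGroup F] [NormedSpace ℝ F]
    {f : ℝ → E} {a b : ℝ} {μ : Measure ℝ} (L : E →L[ℝ] F)
    (hf : IntervalIntegrable f μ a b) : IntervalIntegrable (fun x => L (f x)) μ a b :=
  ⟨L.integrable_comp hf.1, L.integrable_comp hf.2⟩

private lemma inner_cos_integral (τ ξ t : ℝ) (hτ : τ ≠ 0) :
    ∫ η in (0:ℝ)..t, Real.cos ((ξ - η) / τ) = τ * (Real.sin (ξ/τ) - Real.sin ((ξ - t)/τ)) := by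
  have h : ∀ η, HasDerivAt (fun η => -τ * Real.sin ((ξ - η)/τ)) (Real.cos ((ξ - η)/τ)) η := by
    intro η
    have h1 : HasDerivAt (fun η : ℝ => (ξ - η)/τ) (-1/τ) η := by
      simpa using ((hasDerivAt_id η).const_sub ξ).div_const τ
    have := ((Real.hasDerivAt_sin _).comp η h1).const_mul (-τ)
    refine this.congr_deriv ?_
    field_simp
  rw [intervalIntegral.integral_eq_sub_of_hasDerivAt (fun η _ => h η)]
  · simp; ring
  · apply Continuous.intervalIntegrable; fun_prop

private lemma outer_cos_integral (τ t : ℝ) (hτ : τ ≠ 0) :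
    ∫ ξ in (0:ℝ)..t, τ * (Real.sin (ξ/τ) - Real.sin ((ξ - t)/τ))
      = τ ^ 2 * (2 - 2 * Real.cos (t / τ)) := by
  have h : ∀ ξ, HasDerivAt (fun ξ => τ * (-τ * Real.cos (ξ/τ) + τ * Real.cos ((ξ - t)/τ)))
      (τ * (Real.sin (ξ/τ) - Real.sin ((ξ - t)/τ))) ξ := by
    intro ξ
    have h1 : HasDerivAt (fun ξ : ℝ => ξ/τ) (1/τ) ξ := by
      simpa using (hasDerivAt_id ξ).div_const τ
    have h2 : HasDerivAt (fun ξ : ℝ => (ξ - t)/τ) (1/τ) ξ := by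
      simpa using ((hasDerivAt_id ξ).sub_const t).div_const τ
    have c1 := ((Real.hasDerivAt_cos _).comp ξ h1).const_mul (-τ)
    have c2 := ((Real.hasDerivAt_cos _).comp ξ h2).const_mul τ
    have := (c1.add c2).const_mul τ
    refine this.congr_deriv ?_
    field_simp
    ring
  rw [intervalIntegral.integral_eq_sub_of_hasDerivAt (fun ξ _ => h ξ)]
  · rw [show ((0:ℝ) - t) / τ = -(t / τ) by ring, Real.cos_neg]; simp; ring
  · apply Continuous.intervalIntegrable; fun_prop

theorem chord_length_lower_bound {d : ℕ}
    (τ t : ℝ) (hτ : 0 < τ) (ht : 0 ≤ t)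
    (γ : ℝ → EuclideanSpace ℝ (Fin d)) (hγ : Differentiable ℝ γ)
    (hint : IntervalIntegrable (deriv γ) volume 0 t)
    (hcos : ∀ ξ ∈ Set.Icc (0 : ℝ) t, ∀ η ∈ Set.Icc (0 : ℝ) t,
      Real.cos ((ξ - η) / τ) ≤ (inner ℝ (deriv γ ξ) (deriv γ η) : ℝ)) :
    τ ^ 2 * (2 - 2 * Real.cos (t / τ)) ≤ ‖γ t - γ 0‖ ^ 2 := by
  set I : EuclideanSpace ℝ (Fin d) := ∫ s in (0:ℝ)..t, deriv γ s with hI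
  have hdiff : γ t - γ 0 = I := by
    rw [hI, intervalIntegral.integral_deriv_eq_sub (fun x _ => hγ x) hint]
  -- ‖I‖² = ∫ξ ⟪γ' ξ, I⟫
  have hnorm : ‖I‖ ^ 2 = ∫ ξ in (0:ℝ)..t, (inner ℝ (deriv γ ξ) I : ℝ) := by
    have h1 := (innerSL ℝ I).intervalIntegral_comp_comm hint
    simp only [innerSL_apply_apply] at h1
    rw [← real_inner_self_eq_norm_sq, ← h1]
    exact (intervalIntegral.integral_congr fun x _ => real_inner_comm _ _).symm
  have hinner : ∀ ξ, (inner ℝ (deriv γ ξ) I : ℝ)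
      = ∫ η in (0:ℝ)..t, (inner ℝ (deriv γ ξ) (deriv γ η) : ℝ) := by
    intro ξ
    have := (innerSL ℝ (deriv γ ξ)).intervalIntegral_comp_comm hint
    simp only [innerSL_apply_apply] at this
    rw [hI, ← this]
  -- inner bound pointwise in ξ
  have hbound : ∀ ξ ∈ Set.Icc (0:ℝ) t,
      ∫ η in (0:ℝ)..t, Real.cos ((ξ - η) / τ)
        ≤ ∫ η in (0:ℝ)..t, (inner ℝ (deriv γ ξ) (deriv γ η) : ℝ) := by
    intro ξ hξ
    apply intervalIntegral.integral_mono_on ht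
    · apply Continuous.intervalIntegrable; fun_prop
    · exact clm_comp_intervalIntegrable (innerSL ℝ (deriv γ ξ)) hint
    · intro η hη
      exact hcos ξ hξ η hη
  have houter : ∫ ξ in (0:ℝ)..t, τ * (Real.sin (ξ/τ) - Real.sin ((ξ - t)/τ))
      ≤ ∫ ξ in (0:ℝ)..t, (inner ℝ (deriv γ ξ) I : ℝ) := by
    apply intervalIntegral.integral_mono_on ht
    · apply Continuous.intervalIntegrable; fun_prop
    · have heq : (fun ξ => (inner ℝ (deriv γ ξ) I : ℝ)) = fun ξ => (inner ℝ I (deriv γ ξ) : ℝ) :=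
        funext fun ξ => real_inner_comm _ _
      rw [heq]
      exact clm_comp_intervalIntegrable (innerSL ℝ I) hint
    · intro ξ hξ
      rw [hinner ξ]
      calc τ * (Real.sin (ξ/τ) - Real.sin ((ξ - t)/τ))
          = ∫ η in (0:ℝ)..t, Real.cos ((ξ - η) / τ) := (inner_cos_integral τ ξ t (ne_of_gt hτ)).symm
        _ ≤ _ := hbound ξ hξ
  rw [hdiff, hnorm, ← outer_cos_integral τ t (ne_of_gt hτ)]
  exact houter
end

section
/- Let x, y ∈ ℝ³ be unit vectors with xxᵀ ≠ yyᵀ, and let T_y = {vyᵀ + yvᵀ : v ∈ ℝ³, ⟨v, y⟩ = 0} be the tangent space at yyᵀ of the image of the embedding z ↦ zzᵀ of the projective plane into the 3×3 real matrices. Then, with respect to the Frobenius norm, ‖xxᵀ − yyᵀ‖² = √2 · dist(xxᵀ − yyᵀ, T_y); in particular the quotient ‖xxᵀ − yyᵀ‖²/(2·dist(xxᵀ − yyᵀ, T_y)) is constantly equal to 1/√2. -/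
attribute [local instance] Matrix.frobeniusSeminormedAddCommGroup
  Matrix.frobeniusNormedAddCommGroup

/-- The rank one matrix `x xᵀ` associated with a vector `x ∈ ℝ³`. -/
def outerMat (x : EuclideanSpace ℝ (Fin 3)) : Matrix (Fin 3) (Fin 3) ℝ :=
  Matrix.of fun i j => x i * x j

/-- The tangent space at `y yᵀ` of the image of the embedding `z ↦ z zᵀ` of the
projective plane: all matrices `v yᵀ + y vᵀ` with `v ⊥ y`. -/
def tangentSetRP2 (y : EuclideanSpace ℝ (Fin 3)) : Set (Matrix (Fin 3) (Fin 3) ℝ) :=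
  {B | ∃ v : EuclideanSpace ℝ (Fin 3), (inner ℝ v y : ℝ) = 0 ∧
    B = Matrix.of fun i j => v i * y j + y i * v j}

set_option maxHeartbeats 1600000

section aux

private lemma matnorm_sq (M : Matrix (Fin 3) (Fin 3) ℝ) :
    ‖M‖ ^ 2 = ∑ i, ∑ j, (M i j) ^ 2 := by
  have h2 : ∀ a : ℝ, ‖a‖ ^ (2 : ℝ) = a ^ 2 := by
    intro a
    rw [show (2 : ℝ) = ((2 : ℕ) : ℝ) by norm_num, Real.rpow_natCast]
    simp [sq_abs]
  rw [Matrix.frobenius_norm_def]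
  simp_rw [h2]
  rw [← Real.rpow_natCast _ 2, ← Real.rpow_mul (by positivity)]
  norm_num

private lemma key_ineq (x0 x1 x2 y0 y1 y2 v0 v1 v2 c : ℝ)
    (ha : x0*x0 + x1*x1 + x2*x2 = 1) (hb : y0*y0 + y1*y1 + y2*y2 = 1)
    (hc : c = x0*y0 + x1*y1 + x2*y2) (hv : v0*y0 + v1*y1 + v2*y2 = 0) :
    2*(1 - c^2)^2 ≤
      (x0*x0 - y0*y0 - (v0*y0 + y0*v0))^2 + (x0*x1 - y0*y1 - (v0*y1 + y0*v1))^2 +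
      (x0*x2 - y0*y2 - (v0*y2 + y0*v2))^2 + (x1*x0 - y1*y0 - (v1*y0 + y1*v0))^2 +
      (x1*x1 - y1*y1 - (v1*y1 + y1*v1))^2 + (x1*x2 - y1*y2 - (v1*y2 + y1*v2))^2 +
      (x2*x0 - y2*y0 - (v2*y0 + y2*v0))^2 + (x2*x1 - y2*y1 - (v2*y1 + y2*v1))^2 +
      (x2*x2 - y2*y2 - (v2*y2 + y2*v2))^2 := by
  set w0 : ℝ := c*x0 - c^2*y0 - v0 with hw0
  set w1 : ℝ := c*x1 - c^2*y1 - v1 with hw1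
  set w2 : ℝ := c*x2 - c^2*y2 - v2 with hw2
  have heq :
      (x0*x0 - y0*y0 - (v0*y0 + y0*v0))^2 + (x0*x1 - y0*y1 - (v0*y1 + y0*v1))^2 +
      (x0*x2 - y0*y2 - (v0*y2 + y0*v2))^2 + (x1*x0 - y1*y0 - (v1*y0 + y1*v0))^2 +
      (x1*x1 - y1*y1 - (v1*y1 + y1*v1))^2 + (x1*x2 - y1*y2 - (v1*y2 + y1*v2))^2 +
      (x2*x0 - y2*y0 - (v2*y0 + y2*v0))^2 + (x2*x1 - y2*y1 - (v2*y1 + y2*v1))^2 +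
      (x2*x2 - y2*y2 - (v2*y2 + y2*v2))^2 =
      2*(1 - c^2)^2 +
      ((w0*y0 + y0*w0)^2 + (w0*y1 + y0*w1)^2 + (w0*y2 + y0*w2)^2 +
       (w1*y0 + y1*w0)^2 + (w1*y1 + y1*w1)^2 + (w1*y2 + y1*w2)^2 +
       (w2*y0 + y2*w0)^2 + (w2*y1 + y2*w1)^2 + (w2*y2 + y2*w2)^2) := by
    have ha' : x0*x0 + x1*x1 + x2*x2 = 1 := ha
    -- abbreviations
    set a : ℝ := x0*x0 + x1*x1 + x2*x2 with haa
    set b : ℝ := y0*y0 + y1*y1 + y2*y2 with hbb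
    set m : ℝ := x0*y0 + x1*y1 + x2*y2 with hmm
    set p : ℝ := w0*x0 + w1*x1 + w2*x2 with hpp
    have hP1 : (-4)*a*c + (6*c^2-2)*(m+c) - (8*c^3-4*c)*b = (-4)*a*c + (6*c^2-2)*(m+c) - (8*c^3-4*c)*b := rfl
    linear_combination
      (-(((-4)*a*c + (6*c^2-2)*(m+c) - (8*c^3-4*c)*b) + 4*p + ((-4)*c*m + (8*c^2-4)*b)*c)) * hc
      + (a + 1 - 4*c^2 + 2*b*c^2) * ha
      + (((2*c^2-1)^2*(b+1) + 6*c^2 - 8*c^4) - 4*p*c - ((-4)*c*m + (8*c^2-4)*b)*c^2) * hb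
      + (-((-4)*c*m + (8*c^2-4)*b)) * hv
  rw [heq]
  nlinarith [sq_nonneg (w0*y0 + y0*w0), sq_nonneg (w0*y1 + y0*w1), sq_nonneg (w0*y2 + y0*w2),
    sq_nonneg (w1*y0 + y1*w0), sq_nonneg (w1*y1 + y1*w1), sq_nonneg (w1*y2 + y1*w2),
    sq_nonneg (w2*y0 + y2*w0), sq_nonneg (w2*y1 + y2*w1), sq_nonneg (w2*y2 + y2*w2)]

end aux

theorem rp2_embedding_distance_to_tangent
    (x y : EuclideanSpace ℝ (Fin 3)) (hx : ‖x‖ = 1) (hy : ‖y‖ = 1)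
    (hxy : outerMat x ≠ outerMat y) :
    ‖outerMat x - outerMat y‖ ^ 2 =
      Real.sqrt 2 * Metric.infDist (outerMat x - outerMat y) (tangentSetRP2 y) := by
  classical
  have coord : ∀ z : EuclideanSpace ℝ (Fin 3), ‖z‖ = 1 →
      z 0 * z 0 + z 1 * z 1 + z 2 * z 2 = 1 := by
    intro z hz
    have h : (inner ℝ z z : ℝ) = 1 := by
      rw [real_inner_self_eq_norm_sq, hz]; norm_num
    simp only [PiLp.inner_apply, RCLike.inner_apply, conj_trivial, Fin.sum_univ_three] at h
    linarith
  have ha : x 0 * x 0 + x 1 * x 1 + x 2 * x 2 = 1 := coord x hx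
  have hb : y 0 * y 0 + y 1 * y 1 + y 2 * y 2 = 1 := coord y hy
  set c : ℝ := x 0 * y 0 + x 1 * y 1 + x 2 * y 2 with hc
  -- c² < 1
  have hc1 : c ^ 2 ≤ 1 := by
    have hm : 1 - c ^ 2 = (x 0 * y 1 - x 1 * y 0)^2 + (x 0 * y 2 - x 2 * y 0)^2
        + (x 1 * y 2 - x 2 * y 1)^2 := by
      linear_combination (-(y 0*y 0+y 1*y 1+y 2*y 2)) * ha - hb
        - ((x 0*y 0+x 1*y 1+x 2*y 2)+c) * hc
    nlinarith [sq_nonneg (x 0 * y 1 - x 1 * y 0), sq_nonneg (x 0 * y 2 - x 2 * y 0),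
      sq_nonneg (x 1 * y 2 - x 2 * y 1)]
  have hclt : c ^ 2 < 1 := by
    rcases lt_or_eq_of_le hc1 with h | h
    · exact h
    · exfalso; apply hxy
      have h0 : (x 0 - c * y 0)^2 + (x 1 - c * y 1)^2 + (x 2 - c * y 2)^2 = 0 := by
        linear_combination ha + 2*c*hc + c^2*hb - h
      have e0 : x 0 = c * y 0 := by
        nlinarith [sq_nonneg (x 0 - c * y 0), sq_nonneg (x 1 - c * y 1), sq_nonneg (x 2 - c * y 2)]
      have e1 : x 1 = c * y 1 := by
        nlinarith [sq_nonneg (x 0 - c * y 0), sq_nonneg (x 1 - c * y 1), sq_nonneg (x 2 - c * y 2)]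
      have e2 : x 2 = c * y 2 := by
        nlinarith [sq_nonneg (x 0 - c * y 0), sq_nonneg (x 1 - c * y 1), sq_nonneg (x 2 - c * y 2)]
      have e : ∀ i, x i = c * y i := by
        intro i; fin_cases i
        · exact e0
        · exact e1
        · exact e2
      ext i j
      show x i * x j = y i * y j
      rw [e i, e j]
      linear_combination (y i * y j) * h
  have h1c : (0:ℝ) < 1 - c ^ 2 := by linarith
  set d : ℝ := Real.sqrt 2 * (1 - c ^ 2) with hd
  have hd0 : 0 ≤ d := mul_nonneg (Real.sqrt_nonneg 2) (by linarith)
  have hd2 : d ^ 2 = 2 * (1 - c ^ 2) ^ 2 := by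
    rw [hd, mul_pow, Real.sq_sqrt (by norm_num : (0:ℝ) ≤ 2)]
  set A : Matrix (Fin 3) (Fin 3) ℝ := outerMat x - outerMat y with hA
  set T : Set (Matrix (Fin 3) (Fin 3) ℝ) := tangentSetRP2 y with hT
  -- the tangent point
  set v₀ : EuclideanSpace ℝ (Fin 3) := WithLp.toLp 2 (fun i => c * x i - c ^ 2 * y i) with hv₀def
  have hv₀ : (inner ℝ v₀ y : ℝ) = 0 := by
    simp only [hv₀def, PiLp.toLp_apply, PiLp.inner_apply, RCLike.inner_apply, conj_trivial, Fin.sum_univ_three]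
    linear_combination (-c) * hc - c^2 * hb
  set B₀ : Matrix (Fin 3) (Fin 3) ℝ := Matrix.of fun i j => v₀ i * y j + y i * v₀ j with hB₀
  have hmem : B₀ ∈ T := ⟨v₀, hv₀, rfl⟩
  have hTne : T.Nonempty := ⟨B₀, hmem⟩
  -- norm of A - B₀
  have hW2 : ‖A - B₀‖ ^ 2 = 2 * (1 - c ^ 2) ^ 2 := by
    rw [matnorm_sq]
    simp only [hA, hB₀, hv₀def, PiLp.toLp_apply, Matrix.sub_apply, Matrix.of_apply, outerMat,
      Fin.sum_univ_three]
    linear_combination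
      (-((-4)*(x 0*x 0+x 1*x 1+x 2*x 2)*c
         + (6*c^2-2)*((x 0*y 0+x 1*y 1+x 2*y 2)+c)
         - (8*c^3-4*c)*(y 0*y 0+y 1*y 1+y 2*y 2))) * hc
      + ((x 0*x 0+x 1*x 1+x 2*x 2) + 1 - 4*c^2 + 2*(y 0*y 0+y 1*y 1+y 2*y 2)*c^2) * ha
      + ((2*c^2-1)^2*((y 0*y 0+y 1*y 1+y 2*y 2)+1) + 6*c^2 - 8*c^4) * hb
  have hWd : ‖A - B₀‖ = d := by
    have h1 : ‖A - B₀‖ = Real.sqrt (‖A - B₀‖ ^ 2) := (Real.sqrt_sq (norm_nonneg _)).symm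
    rw [h1, hW2, ← hd2, Real.sqrt_sq hd0]
  -- infDist = d
  have hinf : Metric.infDist A T = d := by
    refine le_antisymm ?_ ?_
    · have := Metric.infDist_le_dist_of_mem (x := A) hmem
      rwa [dist_eq_norm, hWd] at this
    · by_contra hcon
      push_neg at hcon
      obtain ⟨B, hBmem, hBlt⟩ := (Metric.infDist_lt_iff hTne).mp hcon
      obtain ⟨v, hv, rfl⟩ := hBmem
      have hvco : v 0 * y 0 + v 1 * y 1 + v 2 * y 2 = 0 := by
        simp only [PiLp.inner_apply, RCLike.inner_apply, conj_trivial, Fin.sum_univ_three] at hv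
        linarith
      have hkey := key_ineq (x 0) (x 1) (x 2) (y 0) (y 1) (y 2) (v 0) (v 1) (v 2) c ha hb hc hvco
      have hs2 : d ^ 2 ≤ dist A (Matrix.of fun i j => v i * y j + y i * v j) ^ 2 := by
        rw [dist_eq_norm, hd2, matnorm_sq]
        simp only [hA, Matrix.sub_apply, Matrix.of_apply, outerMat, Fin.sum_univ_three]
        linarith [hkey]
      have hdn : (0:ℝ) ≤ dist A (Matrix.of fun i j => v i * y j + y i * v j) := dist_nonneg
      nlinarith [hs2, hBlt, hdn]
  -- conclude
  rw [hinf]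
  have hA2 : ‖A‖ ^ 2 = 2 * (1 - c ^ 2) := by
    rw [matnorm_sq]
    simp only [hA, Matrix.sub_apply, Matrix.of_apply, outerMat, Fin.sum_univ_three]
    linear_combination
      (2*((x 0*y 0+x 1*y 1+x 2*y 2)+c)) * hc
      + ((x 0*x 0+x 1*x 1+x 2*x 2)+1) * ha
      + ((y 0*y 0+y 1*y 1+y 2*y 2)+1) * hb
  rw [hA2, hd, ← mul_assoc, Real.mul_self_sqrt (by norm_num : (0:ℝ) ≤ 2)]
end

section
/- Let E = {xxᵀ : x ∈ ℝ³, ‖x‖ = 1} be the image of the real projective plane ℝP² under the embedding x ↦ xxᵀ, viewed as a subset of the 3×3 real matrices with the Frobenius norm. Then the reach of E equals 1/√2; that is, 1/√2 = sup{ t ≥ 0 : every matrix A with dist(A, E) < t has a unique nearest point in E }. -/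
set_option maxHeartbeats 1000000

attribute [local instance] Matrix.frobeniusSeminormedAddCommGroup
  Matrix.frobeniusNormedAddCommGroup

/-- The image of the real projective plane `ℝP²` under the embedding `x ↦ x xᵀ`,
viewed as a subset of the `3 × 3` real matrices (with the Frobenius norm). -/
def RP2Embedded : Set (Matrix (Fin 3) (Fin 3) ℝ) :=
  {A | ∃ x : EuclideanSpace ℝ (Fin 3), ‖x‖ = 1 ∧ A = Matrix.of fun i j => x i * x j}



noncomputable def Ff (M : Matrix (Fin 3) (Fin 3) ℝ) : ℝ := ∑ i, ∑ j, (M i j)^2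

noncomputable def qf (A : Matrix (Fin 3) (Fin 3) ℝ) (x : Fin 3 → ℝ) : ℝ :=
  ∑ i, ∑ j, A i j * x i * x j

noncomputable def Sm (A : Matrix (Fin 3) (Fin 3) ℝ) : Fin 3 → Fin 3 → ℝ :=
  fun i j => (A i j + A j i)/2

noncomputable def Sv (A : Matrix (Fin 3) (Fin 3) ℝ) (x : Fin 3 → ℝ) : Fin 3 → ℝ :=
  fun i => ∑ j, Sm A i j * x j

lemma Ff_nonneg (M : Matrix (Fin 3) (Fin 3) ℝ) : 0 ≤ Ff M :=
  Finset.sum_nonneg fun i _ => Finset.sum_nonneg fun j _ => sq_nonneg _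

lemma norm_sq_eq_Ff (M : Matrix (Fin 3) (Fin 3) ℝ) : ‖M‖^2 = Ff M := by
  rw [Matrix.frobenius_norm_def, ← Real.sqrt_eq_rpow, Real.sq_sqrt (by positivity)]
  unfold Ff; congr 1; ext i; congr 1; ext j
  rw [Real.rpow_two]; simp [Real.norm_eq_abs, sq_abs]

lemma euc_norm_one_iff (x : EuclideanSpace ℝ (Fin 3)) : ‖x‖ = 1 ↔ ∑ i, (x i)^2 = 1 := by
  have h : ‖x‖^2 = ∑ i, (x i)^2 := by
    rw [EuclideanSpace.norm_eq, Real.sq_sqrt (by positivity)]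
    simp [Real.norm_eq_abs, sq_abs]
  constructor
  · intro h1; rw [← h, h1]; norm_num
  · intro h1; nlinarith [norm_nonneg x]

lemma mem_E_iff (A : Matrix (Fin 3) (Fin 3) ℝ) :
    A ∈ RP2Embedded ↔ ∃ x : Fin 3 → ℝ, (∑ i, (x i)^2 = 1) ∧ A = Matrix.of fun i j => x i * x j := by
  constructor
  · rintro ⟨x, hx, rfl⟩
    exact ⟨x, (euc_norm_one_iff x).1 hx, rfl⟩
  · rintro ⟨x, hx, rfl⟩
    refine ⟨(WithLp.equiv 2 (∀ _ : Fin 3, ℝ)).symm x, ?_, ?_⟩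
    · rw [euc_norm_one_iff]; simpa using hx
    · simp

lemma qf_expand (A : Matrix (Fin 3) (Fin 3) ℝ) (x g : Fin 3 → ℝ) (s t : ℝ) :
    qf A (fun i => s*(x i + t*g i))
      = s^2*(qf A x + 2*t*(∑ i, g i * Sv A x i) + t^2 * qf A g) := by
  simp only [qf, Sv, Sm, Fin.sum_univ_three]; ring

lemma sum_sq_expand (x g : Fin 3 → ℝ) (s t : ℝ) :
    ∑ i, (s*(x i + t*g i))^2
      = s^2*((∑ i, (x i)^2) + 2*t*(∑ i, x i * g i) + t^2 * ∑ i, (g i)^2) := by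
  simp only [Fin.sum_univ_three]; ring

lemma eigen (A : Matrix (Fin 3) (Fin 3) ℝ) (M : ℝ) (x : Fin 3 → ℝ)
    (hx : ∑ i, (x i)^2 = 1) (hqx : qf A x = M)
    (hmax : ∀ z : Fin 3 → ℝ, (∑ i, (z i)^2 = 1) → qf A z ≤ M) :
    ∀ i, Sv A x i = M * x i := by
  have hxg : ∑ i, x i * (Sv A x i - M * x i) = 0 := by
    simp only [Sv, Sm, Fin.sum_univ_three] at hx hqx ⊢
    simp only [qf, Fin.sum_univ_three] at hqx
    linear_combination hqx - M * hx
  set g : Fin 3 → ℝ := fun i => Sv A x i - M * x i with hg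
  have hGzero : ∑ i, (g i)^2 = 0 := by
    by_contra hG0
    have hG : 0 < ∑ i, (g i)^2 :=
      lt_of_le_of_ne (Finset.sum_nonneg fun i _ => sq_nonneg _) (Ne.symm hG0)
    set G := ∑ i, (g i)^2 with hGdef
    set K : ℝ := M * G - qf A g with hK
    have hb : (0:ℝ) < |K| + 1 := by positivity
    set t : ℝ := 2*G/(|K|+1) with ht
    have htpos : 0 < t := by positivity
    have hr : (0:ℝ) < 1 + t^2*G := by positivity
    set s : ℝ := (Real.sqrt (1 + t^2*G))⁻¹ with hs
    have hs2 : s^2 * (1 + t^2*G) = 1 := by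
      rw [hs, ← Real.sqrt_inv, Real.sq_sqrt (by positivity)]
      field_simp
    have hgSv : ∑ i, g i * Sv A x i = G := by
      have h1 : ∀ i, Sv A x i = g i + M * x i := fun i => by rw [hg]; ring
      calc ∑ i, g i * Sv A x i = ∑ i, g i * (g i + M * x i) := by
            exact Finset.sum_congr rfl fun i _ => by rw [h1]
        _ = G + M * ∑ i, x i * g i := by
            rw [hGdef]; simp only [Fin.sum_univ_three]; ring
        _ = G := by rw [hxg]; ring
    have hzu : ∑ i, (fun i => s*(x i + t*g i)) i ^2 = 1 := by
      rw [sum_sq_expand x g s t, hx, hxg]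
      linear_combination hs2
    have hle := hmax _ hzu
    rw [qf_expand A x g s t, hqx, hgSv] at hle
    have e1 : s^2*(M + 2*t*G + t^2*qf A g)*(1+t^2*G) = (M + 2*t*G + t^2*qf A g) := by
      linear_combination (M + 2*t*G + t^2*qf A g) * hs2
    have h8 : M + 2*t*G + t^2*qf A g ≤ M*(1+t^2*G) := by
      have h7 := mul_le_mul_of_nonneg_right hle hr.le
      rw [e1] at h7; exact h7
    have hineq : 2*t*G ≤ t^2 * K := by rw [hK]; linarith [h8]
    have h2 : (|K|+1) ≤ K := by
      rw [ht] at hineq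
      rw [div_pow] at hineq
      have h3 := mul_le_mul_of_nonneg_right hineq (le_of_lt (mul_pos hb hb))
      have h4 : 2*(2*G/(|K|+1))*G * ((|K|+1)*(|K|+1)) = 4*G^2*(|K|+1) := by
        field_simp; ring
      have h5 : (2*G)^2/(|K|+1)^2 * K * ((|K|+1)*(|K|+1)) = 4*G^2*K := by
        field_simp; ring
      rw [h4, h5] at h3
      nlinarith [hG, mul_pos hG hG]
    linarith [le_abs_self K]
  have hsq : ∀ i, (g i)^2 = 0 :=
    fun i => (Finset.sum_eq_zero_iff_of_nonneg (fun i _ => sq_nonneg (g i))).1 hGzero i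
      (Finset.mem_univ i)
  intro i
  have h6 := pow_eq_zero_iff (n := 2) (by norm_num) |>.1 (hsq i)
  have h7 : Sv A x i - M * x i = 0 := h6
  linarith [h7]

-- completeness of an orthonormal triple in ℝ³
lemma complete_triple (u v w : Fin 3 → ℝ)
    (hu : ∑ i, (u i)^2 = 1) (hv : ∑ i, (v i)^2 = 1) (hw : ∑ i, (w i)^2 = 1)
    (huv : ∑ i, u i * v i = 0) (huw : ∑ i, u i * w i = 0) (hvw : ∑ i, v i * w i = 0) :
    ∀ j k, u j * u k + v j * v k + w j * w k = if j = k then 1 else 0 := by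
  set UU := (Matrix.of fun i j => ![u, v, w] j i : Matrix (Fin 3) (Fin 3) ℝ) with hU
  have h1 : UU.transpose * UU = 1 := by
    ext j k
    simp only [Fin.sum_univ_three] at hu hv hw huv huw hvw
    fin_cases j <;> fin_cases k <;>
      simp [hU, Matrix.mul_apply, Matrix.one_apply, Fin.sum_univ_three] <;> linarith
  have h2 : UU * UU.transpose = 1 := mul_eq_one_comm.mp h1
  intro j k
  have h3 := Matrix.ext_iff.2 h2 j k
  simp [hU, Matrix.mul_apply, Matrix.one_apply, Fin.sum_univ_three] at h3
  by_cases hjk : j = k <;> simp [hjk] at h3 ⊢ <;> linarith [h3]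

lemma sym_part_le (A : Matrix (Fin 3) (Fin 3) ℝ) :
    (∑ i, ∑ j, (Sm A i j)^2) ≤ Ff A := by
  simp only [Ff, Sm, Fin.sum_univ_three]
  nlinarith [sq_nonneg (A 0 1 - A 1 0), sq_nonneg (A 0 2 - A 2 0), sq_nonneg (A 1 2 - A 2 1)]

lemma fro_lower (A : Matrix (Fin 3) (Fin 3) ℝ) (M : ℝ) (x y : Fin 3 → ℝ)
    (hx : ∑ i, (x i)^2 = 1) (hy : ∑ i, (y i)^2 = 1)
    (hex : ∀ i, Sv A x i = M * x i) (hey : ∀ i, Sv A y i = M * y i)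
    (hne : ¬ ∀ i j, x i * x j = y i * y j) :
    2*M^2 ≤ Ff A := by
  simp only [Fin.sum_univ_three] at hx hy
  set b : ℝ := x 0 * y 0 + x 1 * y 1 + x 2 * y 2 with hbdef
  have hlag : 1 - b^2 = (x 0*y 1 - x 1*y 0)^2 + (x 0*y 2 - x 2*y 0)^2 + (x 1*y 2 - x 2*y 1)^2 := by
    rw [hbdef]
    linear_combination (-(y 0^2 + y 1^2 + y 2^2))*hx - hy
  have hb2 : b^2 ≤ 1 := by
    linarith [hlag, sq_nonneg (x 0*y 1 - x 1*y 0), sq_nonneg (x 0*y 2 - x 2*y 0),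
      sq_nonneg (x 1*y 2 - x 2*y 1)]
  have hb1 : b^2 < 1 := by
    rcases lt_or_eq_of_le hb2 with h | hbeq
    · exact h
    · exfalso
      have hzero : (x 0*y 1 - x 1*y 0)^2 + (x 0*y 2 - x 2*y 0)^2 + (x 1*y 2 - x 2*y 1)^2 = 0 := by
        linarith
      have h01 : x 0*y 1 - x 1*y 0 = 0 := by
        have hsq : (x 0*y 1 - x 1*y 0)^2 = 0 := by
          linarith [hzero, sq_nonneg (x 0*y 2 - x 2*y 0), sq_nonneg (x 1*y 2 - x 2*y 1), sq_nonneg (x 0*y 1 - x 1*y 0), sq_nonneg (x 0*y 2 - x 2*y 0), sq_nonneg (x 1*y 2 - x 2*y 1)]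
        exact pow_eq_zero_iff (n := 2) (by norm_num) |>.1 hsq
      have h02 : x 0*y 2 - x 2*y 0 = 0 := by
        have hsq : (x 0*y 2 - x 2*y 0)^2 = 0 := by
          linarith [hzero, sq_nonneg (x 0*y 1 - x 1*y 0), sq_nonneg (x 1*y 2 - x 2*y 1), sq_nonneg (x 0*y 1 - x 1*y 0), sq_nonneg (x 0*y 2 - x 2*y 0), sq_nonneg (x 1*y 2 - x 2*y 1)]
        exact pow_eq_zero_iff (n := 2) (by norm_num) |>.1 hsq
      have h12 : x 1*y 2 - x 2*y 1 = 0 := by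
        have hsq : (x 1*y 2 - x 2*y 1)^2 = 0 := by
          linarith [hzero, sq_nonneg (x 0*y 1 - x 1*y 0), sq_nonneg (x 0*y 2 - x 2*y 0), sq_nonneg (x 0*y 1 - x 1*y 0), sq_nonneg (x 0*y 2 - x 2*y 0), sq_nonneg (x 1*y 2 - x 2*y 1)]
        exact pow_eq_zero_iff (n := 2) (by norm_num) |>.1 hsq
      have hyb0 : y 0 = b * x 0 := by
        rw [hbdef]; linear_combination (-(y 0))*hx - x 1*h01 - x 2*h02
      have hyb1 : y 1 = b * x 1 := by
        rw [hbdef]; linear_combination (-(y 1))*hx + x 0*h01 - x 2*h12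
      have hyb2 : y 2 = b * x 2 := by
        rw [hbdef]; linear_combination (-(y 2))*hx + x 0*h02 + x 1*h12
      have hyb : ∀ i, y i = b * x i := by
        intro i; fin_cases i
        · exact hyb0
        · exact hyb1
        · exact hyb2
      apply hne
      intro i j
      rw [hyb i, hyb j]
      linear_combination (- x i * x j) * hbeq
  set c : ℝ := Real.sqrt (1 - b^2) with hcdef
  have hc2 : c^2 = 1 - b^2 := Real.sq_sqrt (by linarith)
  have hcpos : 0 < c := Real.sqrt_pos.2 (by linarith)
  have hcne : c ≠ 0 := ne_of_gt hcpos
  set v : Fin 3 → ℝ := fun i => c⁻¹ * (y i - b * x i) with hvdef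
  have hv : ∑ i, (v i)^2 = 1 := by
    have hsum : (y 0 - b*x 0)^2 + (y 1 - b*x 1)^2 + (y 2 - b*x 2)^2 = c^2 := by
      rw [hc2]; linear_combination hy + b^2*hx + 2*b*hbdef
    have h1 : ∑ i, (v i)^2 = c⁻¹^2 * c^2 := by
      rw [← hsum]; simp only [hvdef, Fin.sum_univ_three]; ring
    rw [h1]; field_simp
  have hxv : ∑ i, x i * v i = 0 := by
    simp only [hvdef, Fin.sum_univ_three]
    linear_combination (-c⁻¹)*hbdef + (-(c⁻¹*b))*hx
  have hxw0 : ∑ i, x i * (![x 1*v 2 - x 2*v 1, x 2*v 0 - x 0*v 2, x 0*v 1 - x 1*v 0]) i = 0 := by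
    simp only [Fin.sum_univ_three]; simp; ring
  set w : Fin 3 → ℝ := ![x 1*v 2 - x 2*v 1, x 2*v 0 - x 0*v 2, x 0*v 1 - x 1*v 0] with hwdef
  have hw0 : w 0 = x 1*v 2 - x 2*v 1 := rfl
  have hw1 : w 1 = x 2*v 0 - x 0*v 2 := rfl
  have hw2 : w 2 = x 0*v 1 - x 1*v 0 := rfl
  have hxw : ∑ i, x i * w i = 0 := by
    simp only [Fin.sum_univ_three, hw0, hw1, hw2]; ring
  have hvw : ∑ i, v i * w i = 0 := by
    simp only [Fin.sum_univ_three, hw0, hw1, hw2]; ring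
  have hw : ∑ i, (w i)^2 = 1 := by
    simp only [Fin.sum_univ_three, hw0, hw1, hw2] at hv hxv ⊢
    linear_combination (v 0^2 + v 1^2 + v 2^2)*hx + hv
      - (x 0*v 0 + x 1*v 1 + x 2*v 2)*hxv
  have hE := complete_triple x v w (by simp only [Fin.sum_univ_three]; linarith) hv hw hxv hxw hvw
  have hvE : ∀ i, Sv A v i = M * v i := by
    intro i
    have hlin : Sv A v i = c⁻¹ * (Sv A y i - b * Sv A x i) := by
      simp only [Sv, hvdef, Fin.sum_univ_three]; ring
    rw [hlin, hex i, hey i, hvdef]; ring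
  -- Frobenius norm of symmetric part decomposes over the orthonormal basis
  have key : (∑ i, ∑ j, (Sm A i j)^2)
      = (∑ i, (Sv A x i)^2) + (∑ i, (Sv A v i)^2) + (∑ i, (Sv A w i)^2) := by
    have h00 := hE 0 0; have h01 := hE 0 1; have h02 := hE 0 2
    have h10 := hE 1 0; have h11 := hE 1 1; have h12' := hE 1 2
    have h20 := hE 2 0; have h21 := hE 2 1; have h22 := hE 2 2
    norm_num [Fin.ext_iff] at h00 h01 h02 h10 h11 h12' h20 h21 h22
    simp only [Sv, Fin.sum_univ_three]
    linear_combination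
      (-(Sm A 0 0*Sm A 0 0 + Sm A 1 0*Sm A 1 0 + Sm A 2 0*Sm A 2 0))*h00
      + (-(Sm A 0 0*Sm A 0 1 + Sm A 1 0*Sm A 1 1 + Sm A 2 0*Sm A 2 1))*h01
      + (-(Sm A 0 0*Sm A 0 2 + Sm A 1 0*Sm A 1 2 + Sm A 2 0*Sm A 2 2))*h02
      + (-(Sm A 0 1*Sm A 0 0 + Sm A 1 1*Sm A 1 0 + Sm A 2 1*Sm A 2 0))*h10
      + (-(Sm A 0 1*Sm A 0 1 + Sm A 1 1*Sm A 1 1 + Sm A 2 1*Sm A 2 1))*h11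
      + (-(Sm A 0 1*Sm A 0 2 + Sm A 1 1*Sm A 1 2 + Sm A 2 1*Sm A 2 2))*h12'
      + (-(Sm A 0 2*Sm A 0 0 + Sm A 1 2*Sm A 1 0 + Sm A 2 2*Sm A 2 0))*h20
      + (-(Sm A 0 2*Sm A 0 1 + Sm A 1 2*Sm A 1 1 + Sm A 2 2*Sm A 2 1))*h21
      + (-(Sm A 0 2*Sm A 0 2 + Sm A 1 2*Sm A 1 2 + Sm A 2 2*Sm A 2 2))*h22
  have hsx : ∑ i, (Sv A x i)^2 = M^2 := by
    have : ∀ i, Sv A x i = M * x i := hex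
    simp only [Fin.sum_univ_three, this]
    linear_combination M^2*hx
  have hsv : ∑ i, (Sv A v i)^2 = M^2 := by
    simp only [Fin.sum_univ_three, hvE]
    simp only [Fin.sum_univ_three] at hv
    linear_combination M^2*hv
  have hsw : 0 ≤ ∑ i, (Sv A w i)^2 := Finset.sum_nonneg fun i _ => sq_nonneg _
  have hFS : 2*M^2 ≤ ∑ i, ∑ j, (Sm A i j)^2 := by
    rw [key, hsx, hsv]; linarith
  have hFfS := sym_part_le A
  linarith

lemma isCompact_E : IsCompact RP2Embedded := by
  have h2 : RP2Embedded = (fun x : EuclideanSpace ℝ (Fin 3) =>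
      (Matrix.of fun i j => x i * x j : Matrix (Fin 3) (Fin 3) ℝ)) ''
      Metric.sphere 0 1 := by
    ext A
    simp only [RP2Embedded, Set.mem_setOf_eq, Set.mem_image, mem_sphere_iff_norm, sub_zero]
    constructor
    · rintro ⟨x, hx, rfl⟩; exact ⟨x, hx, rfl⟩
    · rintro ⟨x, hx, rfl⟩; exact ⟨x, hx, rfl⟩
  rw [h2]
  refine (isCompact_sphere 0 1).image ?_
  apply continuous_matrix
  intro i j
  exact ((continuous_apply i).comp (PiLp.continuous_ofLp 2 _)).mul
    ((continuous_apply j).comp (PiLp.continuous_ofLp 2 _))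

lemma E_nonempty : RP2Embedded.Nonempty := by
  refine ⟨Matrix.of fun i j => (![1,0,0] : Fin 3 → ℝ) i * ![1,0,0] j, ?_⟩
  rw [mem_E_iff]
  exact ⟨![1,0,0], by norm_num [Fin.sum_univ_three, Matrix.cons_val_two, Matrix.tail_cons, Matrix.head_cons], rfl⟩

lemma dist_sq_eq (A : Matrix (Fin 3) (Fin 3) ℝ) (x : Fin 3 → ℝ) (hx : ∑ i, (x i)^2 = 1) :
    Ff (A - Matrix.of fun i j => x i * x j) = Ff A - 2 * qf A x + 1 := by
  simp only [Ff, qf, Matrix.sub_apply, Matrix.of_apply, Fin.sum_univ_three] at *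
  linear_combination (x 0^2 + x 1^2 + x 2^2 + 1) * hx

lemma norm_sub_proj (A : Matrix (Fin 3) (Fin 3) ℝ) (x : Fin 3 → ℝ) (hx : ∑ i, (x i)^2 = 1) :
    ‖A - Matrix.of fun i j => x i * x j‖^2 = Ff A - 2 * qf A x + 1 := by
  rw [norm_sq_eq_Ff, dist_sq_eq A x hx]

lemma sqrt2_mem : (1 / Real.sqrt 2) ∈ {t : ℝ | 0 ≤ t ∧ ∀ A : Matrix (Fin 3) (Fin 3) ℝ,
    Metric.infDist A RP2Embedded < t →
      ∃! P, P ∈ RP2Embedded ∧ ‖A - P‖ = Metric.infDist A RP2Embedded} := by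
  constructor
  · positivity
  intro A hA
  set d := Metric.infDist A RP2Embedded with hd
  have hd0 : 0 ≤ d := Metric.infDist_nonneg
  obtain ⟨P, hPE, hPd⟩ := isCompact_E.exists_infDist_eq_dist E_nonempty A
  rw [dist_eq_norm] at hPd
  refine ⟨P, ⟨hPE, hPd.symm⟩, ?_⟩
  rintro Q ⟨hQE, hQd⟩
  by_contra hQP
  -- extract unit vectors
  obtain ⟨y, hy, rfl⟩ := (mem_E_iff Q).1 hQE
  obtain ⟨x, hx, rfl⟩ := (mem_E_iff P).1 hPE
  set M : ℝ := (Ff A + 1 - d^2)/2 with hM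
  have hmax : ∀ z : Fin 3 → ℝ, (∑ i, (z i)^2 = 1) → qf A z ≤ M := by
    intro z hz
    have hmem := (mem_E_iff (Matrix.of fun i j => z i * z j)).2 ⟨z, hz, rfl⟩
    have h1 : d ≤ ‖A - Matrix.of fun i j => z i * z j‖ := by
      rw [← dist_eq_norm]; exact Metric.infDist_le_dist_of_mem hmem
    have h2 : d^2 ≤ ‖A - Matrix.of fun i j => z i * z j‖^2 :=
      pow_le_pow_left₀ hd0 h1 2
    rw [norm_sub_proj A z hz] at h2
    rw [hM]; linarith
  have hqx : qf A x = M := by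
    have h1 : d^2 = Ff A - 2 * qf A x + 1 := by rw [hd, hPd, norm_sub_proj A x hx]
    rw [hM]; linarith
  have hqy : qf A y = M := by
    have h1 : d^2 = Ff A - 2 * qf A y + 1 := by rw [← hQd, norm_sub_proj A y hy]
    rw [hM]; linarith
  have hex := eigen A M x hx hqx hmax
  have hey := eigen A M y hy hqy hmax
  have hne : ¬ ∀ i j, x i * x j = y i * y j := by
    intro hall
    apply hQP
    ext i j
    simp only [Matrix.of_apply]
    exact (hall i j).symm
  have h2M := fro_lower A M x y hx hy hex hey hne
  have hdM : d^2 = Ff A - 2*M + 1 := by rw [hM]; ring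
  have hhalf : 1/2 ≤ d^2 := by nlinarith [sq_nonneg (M - 1/2)]
  have hlt : d^2 < 1/2 := by
    have h1 : d * Real.sqrt 2 < 1 := (lt_div_iff₀ (by positivity)).1 hA
    nlinarith [Real.sq_sqrt (by norm_num : (0:ℝ) ≤ 2), Real.sqrt_nonneg 2,
      mul_nonneg hd0 (Real.sqrt_nonneg 2)]
  linarith

noncomputable def ex1 : Fin 3 → ℝ := ![1,0,0]
noncomputable def ex2 : Fin 3 → ℝ := ![0,1,0]
noncomputable def A0 : Matrix (Fin 3) (Fin 3) ℝ :=
  Matrix.of fun i j => (ex1 i * ex1 j + ex2 i * ex2 j)/2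

lemma hx1 : ∑ i, (ex1 i)^2 = 1 := by norm_num [ex1, Fin.sum_univ_three, Matrix.cons_val_two, Matrix.tail_cons, Matrix.head_cons]
lemma hx2 : ∑ i, (ex2 i)^2 = 1 := by norm_num [ex2, Fin.sum_univ_three, Matrix.cons_val_two, Matrix.tail_cons, Matrix.head_cons]

lemma FfA0 : Ff A0 = 1/2 := by
  norm_num [Ff, A0, ex1, ex2, Fin.sum_univ_three, Matrix.cons_val_two, Matrix.tail_cons, Matrix.head_cons]

lemma qfA0 (z : Fin 3 → ℝ) : qf A0 z = ((z 0)^2 + (z 1)^2)/2 := by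
  simp only [qf, A0, ex1, ex2, Matrix.of_apply, Fin.sum_univ_three, Matrix.cons_val_two, Matrix.tail_cons, Matrix.head_cons]
  norm_num; ring

lemma sqrt_half : Real.sqrt (1/2) = 1 / Real.sqrt 2 := by
  rw [one_div, one_div, ← Real.sqrt_inv]

lemma norm_A0_sub (x : Fin 3 → ℝ) (hx : ∑ i, (x i)^2 = 1) (hq : qf A0 x = 1/2) :
    ‖A0 - Matrix.of fun i j => x i * x j‖ = 1 / Real.sqrt 2 := by
  have h1 : ‖A0 - Matrix.of fun i j => x i * x j‖^2 = 1/2 := by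
    rw [norm_sub_proj A0 x hx, FfA0, hq]; norm_num
  have h2 : ‖A0 - Matrix.of fun i j => x i * x j‖ = Real.sqrt (1/2) := by
    rw [← h1, Real.sqrt_sq (norm_nonneg _)]
  rw [h2, sqrt_half]

lemma infDist_A0 : Metric.infDist A0 RP2Embedded = 1 / Real.sqrt 2 := by
  obtain ⟨P, hPE, hPd⟩ := isCompact_E.exists_infDist_eq_dist E_nonempty A0
  apply le_antisymm
  · have hmem := (mem_E_iff (Matrix.of fun i j => ex1 i * ex1 j)).2 ⟨ex1, hx1, rfl⟩
    calc Metric.infDist A0 RP2Embedded ≤ dist A0 (Matrix.of fun i j => ex1 i * ex1 j) :=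
          Metric.infDist_le_dist_of_mem hmem
      _ = 1 / Real.sqrt 2 := by
          rw [dist_eq_norm]
          exact norm_A0_sub ex1 hx1 (by rw [qfA0]; norm_num [ex1])
  · rw [hPd, dist_eq_norm]
    obtain ⟨z, hz, rfl⟩ := (mem_E_iff P).1 hPE
    have h1 : ‖A0 - Matrix.of fun i j => z i * z j‖^2 = 1/2 + (1 - ((z 0)^2 + (z 1)^2)) := by
      rw [norm_sub_proj A0 z hz, FfA0, qfA0]; ring
    have h2 : (z 0)^2 + (z 1)^2 ≤ 1 := by
      simp only [Fin.sum_univ_three] at hz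
      nlinarith [sq_nonneg (z 2)]
    have h3 : 1/2 ≤ ‖A0 - Matrix.of fun i j => z i * z j‖^2 := by rw [h1]; linarith
    calc 1/Real.sqrt 2 = Real.sqrt (1/2) := sqrt_half.symm
      _ ≤ Real.sqrt (‖A0 - Matrix.of fun i j => z i * z j‖^2) := Real.sqrt_le_sqrt h3
      _ = ‖A0 - Matrix.of fun i j => z i * z j‖ := Real.sqrt_sq (norm_nonneg _)

lemma upper_bound {t : ℝ} (ht : t ∈ {t : ℝ | 0 ≤ t ∧ ∀ A : Matrix (Fin 3) (Fin 3) ℝ,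
    Metric.infDist A RP2Embedded < t →
      ∃! P, P ∈ RP2Embedded ∧ ‖A - P‖ = Metric.infDist A RP2Embedded}) :
    t ≤ 1 / Real.sqrt 2 := by
  by_contra hlt
  push_neg at hlt
  obtain ⟨-, huniq⟩ := ht
  obtain ⟨P, -, hP⟩ := huniq A0 (by rw [infDist_A0]; exact hlt)
  have h1 : (Matrix.of fun i j => ex1 i * ex1 j) = P := by
    apply hP
    refine ⟨(mem_E_iff _).2 ⟨ex1, hx1, rfl⟩, ?_⟩
    rw [infDist_A0]
    exact norm_A0_sub ex1 hx1 (by rw [qfA0]; norm_num [ex1])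
  have h2 : (Matrix.of fun i j => ex2 i * ex2 j) = P := by
    apply hP
    refine ⟨(mem_E_iff _).2 ⟨ex2, hx2, rfl⟩, ?_⟩
    rw [infDist_A0]
    exact norm_A0_sub ex2 hx2 (by rw [qfA0]; norm_num [ex2])
  have h3 := h1.trans h2.symm
  have h4 := Matrix.ext_iff.2 h3 0 0
  norm_num [ex1, ex2] at h4

theorem reach_RP2_embedded :
    1 / Real.sqrt 2 =
      sSup {t : ℝ | 0 ≤ t ∧ ∀ A : Matrix (Fin 3) (Fin 3) ℝ,
        Metric.infDist A RP2Embedded < t →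
          ∃! P, P ∈ RP2Embedded ∧ ‖A - P‖ = Metric.infDist A RP2Embedded} := by
  apply le_antisymm
  · exact le_csSup ⟨1 / Real.sqrt 2, fun t ht => upper_bound ht⟩ sqrt2_mem
  · exact csSup_le ⟨1 / Real.sqrt 2, sqrt2_mem⟩ fun t ht => upper_bound ht
end
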